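/- arXiv:1612.09397 — 3 statements merged into one kernel-verified Lean document; each statement's English description precedes it below -/
import Mathlib

section
/- Suppose m ≥ 6. For every pair of distinct elements u, v ∈ X with u + v ≠ 1, the number of blocks B ∈ W_6 with u ∈ B and v ∈ B equals λ_6 = (2^m − 8)(2^m − 16)(2^m − 32)/4!; that is, the triple (X, W_2, W_6) is a group divisible design GDD(2^m − 2, 2, 6) with balance parameter λ_6 = (2^m − 8)(2^m − 16)(2^m − 32)/24. -/
open scoped Classical

noncomputable section

/-- `X = GF(2^m) \\ {0, 1}`. -/
def designX (m : ℕ) : Set (GaloisField 2 m) := {x | x ≠ 0 ∧ x ≠ 1}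

/-- `W_k`: the collection of all `k`-element subsets `B` of `X` whose element-sum is `1`
and such that no nonempty proper subset of `B` has element-sum `1`. -/
def designW (m k : ℕ) : Set (Finset (GaloisField 2 m)) :=
  {B | (B : Set (GaloisField 2 m)) ⊆ designX m ∧ B.card = k ∧ B.sum id = 1 ∧
    ∀ I ⊆ B, I.Nonempty → I ≠ B → I.sum id ≠ 1}

section Aux

open scoped symmDiff
open Finset

variable {K : Type*} [Field K] [CharP K 2]

theorem two_eq_zero' : (2:K) = 0 := by
  have := CharP.cast_eq_zero K 2; simpa using this

theorem char2_cancel (a b x y : K) (h : a + x = b + y) : a + b = x + y := by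
  linear_combination h + (b - x) * (two_eq_zero' (K := K))

theorem sum_symmDiff' (S T : Finset K) : ((S ∆ T).sum id) = S.sum id + T.sum id := by
  classical
  have h1 : S ∆ T = (S \ T) ∪ (T \ S) := symmDiff_def S T
  have hd : Disjoint (S \ T) (T \ S) := disjoint_sdiff_sdiff
  rw [h1, Finset.sum_union hd]
  have e1 : (S \ T).sum id + (S ∩ T).sum id = S.sum id := by
    have := Finset.sum_sdiff (f := id) (Finset.inter_subset_left (s₁ := S) (s₂ := T))
    rwa [Finset.sdiff_inter_self_left] at this
  have e2 : (T \ S).sum id + (T ∩ S).sum id = T.sum id := by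
    have := Finset.sum_sdiff (f := id) (Finset.inter_subset_left (s₁ := T) (s₂ := S))
    rwa [Finset.sdiff_inter_self_left] at this
  have hST : (S ∩ T).sum id = (T ∩ S).sum id := by rw [Finset.inter_comm]
  linear_combination e1 + e2 - hST - ((T ∩ S).sum id) * (two_eq_zero' (K := K))

/-- subset sums and subset sums + 1 -/
def Zset (A : Finset K) : Finset K :=
  (A.powerset ×ˢ (Finset.univ : Finset Bool)).image
    (fun Se => Se.1.sum id + if Se.2 then 1 else 0)

def Good (A : Finset K) : Prop :=
  ∀ S ⊆ A, S.Nonempty → S.sum id ≠ 0 ∧ S.sum id ≠ 1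

omit [CharP K 2] in
theorem good_mono {A B : Finset K} (h : B ⊆ A) (hA : Good A) : Good B :=
  fun S hS hne => hA S (hS.trans h) hne

omit [CharP K 2] in
theorem mem_Zset_iff {A : Finset K} {c : K} :
    c ∈ Zset A ↔ ∃ S ⊆ A, c = S.sum id ∨ c = S.sum id + 1 := by
  simp only [Zset, Finset.mem_image, Finset.mem_product, Finset.mem_powerset,
    Finset.mem_univ, and_true, Prod.exists]
  constructor
  · rintro ⟨S, e, hS, rfl⟩
    exact ⟨S, hS, by cases e <;> simp⟩
  · rintro ⟨S, hS, h | h⟩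
    · exact ⟨S, false, hS, by simp [h]⟩
    · exact ⟨S, true, hS, by simp [h]⟩

omit [CharP K 2] in
theorem mem_Zset_of_mem {A : Finset K} {a : K} (ha : a ∈ A) : a ∈ Zset A :=
  mem_Zset_iff.2 ⟨{a}, Finset.singleton_subset_iff.2 ha, Or.inl (by simp)⟩

omit [CharP K 2] in
theorem not_mem_of_not_mem_Zset {A : Finset K} {c : K} (h : c ∉ Zset A) : c ∉ A :=
  fun hc => h (mem_Zset_of_mem hc)

theorem card_Zset {A : Finset K} (hA : Good A) : (Zset A).card = 2 ^ (A.card + 1) := by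
  classical
  rw [Zset, Finset.card_image_of_injOn]
  · rw [Finset.card_product, Finset.card_powerset, Finset.card_univ, Fintype.card_bool,
      pow_succ]
  · rintro ⟨S, e⟩ hS ⟨S', e'⟩ hS' h
    simp only [Finset.mem_coe, Finset.mem_product, Finset.mem_powerset] at hS hS'
    simp only at h
    have hd : (S ∆ S').sum id = (if e then (1:K) else 0) + (if e' then 1 else 0) := by
      rw [sum_symmDiff']
      exact char2_cancel _ _ _ _ h
    have hsub : S ∆ S' ⊆ A := by
      intro x hx
      rw [Finset.mem_symmDiff] at hx
      rcases hx with ⟨h1, _⟩ | ⟨h1, _⟩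
      exacts [hS.1 h1, hS'.1 h1]
    have hee : e = e' := by
      by_contra hne
      have h01 : (if e then (1:K) else 0) + (if e' then 1 else 0) = 1 := by
        cases e <;> cases e' <;> first | (exact absurd rfl hne) | simp
      rcases Finset.eq_empty_or_nonempty (S ∆ S') with he | hne'
      · rw [he, Finset.sum_empty] at hd
        exact one_ne_zero (hd.trans h01).symm
      · exact (hA _ hsub hne').2 (hd.trans h01)
    subst hee
    have h00 : (S ∆ S').sum id = 0 := by
      rw [hd]; cases e <;> simp [two_eq_zero' (K := K)] <;> ring_nf <;>
        simp [two_eq_zero' (K := K)]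
    have hSS : S = S' := by
      rcases Finset.eq_empty_or_nonempty (S ∆ S') with he | hne'
      · exact symmDiff_eq_bot.1 (by rw [he]; rfl)
      · exact absurd h00 (hA _ hsub hne').1
    simp [hSS]

theorem good_insert_iff {A : Finset K} {c : K} (hc : c ∉ A) :
    Good (insert c A) ↔ Good A ∧ c ∉ Zset A := by
  constructor
  · intro h
    refine ⟨good_mono (Finset.subset_insert c A) h, ?_⟩
    intro hmem
    rcases mem_Zset_iff.1 hmem with ⟨S, hS, hcase⟩
    have hcS : c ∉ S := fun h' => hc (hS h')
    have hsub : insert c S ⊆ insert c A := Finset.insert_subset_insert c hS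
    have hne : (insert c S).Nonempty := Finset.insert_nonempty c S
    have hsum : (insert c S).sum id = c + S.sum id := Finset.sum_insert hcS
    have := h _ hsub hne
    rcases hcase with h1 | h1
    · refine this.1 ?_
      rw [hsum, h1]
      linear_combination (S.sum id) * (two_eq_zero' (K := K))
    · refine this.2 ?_
      rw [hsum, h1]
      linear_combination (S.sum id) * (two_eq_zero' (K := K))
  · rintro ⟨hA, hZ⟩
    intro S hS hne
    by_cases hcS : c ∈ S
    · have hS' : S.erase c ⊆ A := by
        intro x hx
        have := hS (Finset.mem_of_mem_erase hx)
        rcases Finset.mem_insert.1 this with h1 | h1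
        · exact absurd h1 (Finset.ne_of_mem_erase hx)
        · exact h1
      have hsum : S.sum id = c + (S.erase c).sum id := by
        rw [← Finset.add_sum_erase S id hcS]; rfl
      constructor
      · intro h0
        apply hZ
        exact mem_Zset_iff.2 ⟨S.erase c, hS', Or.inl (by
          linear_combination h0 - hsum - (S.erase c).sum id * (two_eq_zero' (K := K)))⟩
      · intro h0
        apply hZ
        exact mem_Zset_iff.2 ⟨S.erase c, hS', Or.inr (by
          linear_combination h0 - hsum - (S.erase c).sum id * (two_eq_zero' (K := K)))⟩
    · have : S ⊆ A := by
        intro x hx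
        rcases Finset.mem_insert.1 (hS hx) with h1 | h1
        · exact absurd (h1 ▸ hx) hcS
        · exact h1
      exact hA S this hne

theorem card_filter_not_Zset [Fintype K] {A : Finset K} (hA : Good A) :
    (Finset.univ.filter (fun c => c ∉ Zset A)).card = Fintype.card K - 2 ^ (A.card + 1) := by
  rw [Finset.filter_not, Finset.card_sdiff_of_subset (Finset.filter_subset _ _), Finset.card_univ,
    Finset.filter_mem_eq_inter, Finset.univ_inter, card_Zset hA]


def blockOfFun (A2 : Finset K) (t : K × K × K) : Finset K :=
  insert (1 + (insert t.2.2 (insert t.2.1 (insert t.1 A2))).sum id)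
    (insert t.2.2 (insert t.2.1 (insert t.1 A2)))

theorem blockOfFun_mk (A2 : Finset K) (a b c : K) :
    blockOfFun A2 (a, b, c) = insert (1 + (insert c (insert b (insert a A2))).sum id)
      (insert c (insert b (insert a A2))) := rfl

theorem blocks_card [Fintype K] (u v : K) (hu0 : u ≠ 0) (hu1 : u ≠ 1)
    (hv0 : v ≠ 0) (hv1 : v ≠ 1) (huv : u ≠ v) (hsum : u + v ≠ 1) :
    (Finset.univ.filter (fun B : Finset K =>
      ((B : Set K) ⊆ {x : K | x ≠ 0 ∧ x ≠ 1}) ∧ B.card = 6 ∧ B.sum id = 1 ∧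
      (∀ I ⊆ B, I.Nonempty → I ≠ B → I.sum id ≠ 1) ∧ u ∈ B ∧ v ∈ B)).card * 24 =
    (Fintype.card K - 8) * (Fintype.card K - 16) * (Fintype.card K - 32) := by
  classical
  set q := Fintype.card K with hq
  -- base goodness
  have hvu1 : v ≠ u + 1 := by
    intro h; apply hsum; rw [h]; linear_combination u * (two_eq_zero' (K := K))
  have good1 : Good ({v} : Finset K) := by
    intro S hS hne
    rcases Finset.subset_singleton_iff.1 hS with rfl | rfl
    · exact absurd hne (by simp)
    · simpa using ⟨hv0, hv1⟩
  have huZ1 : u ∉ Zset ({v} : Finset K) := by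
    intro h
    rcases mem_Zset_iff.1 h with ⟨S, hS, hc⟩
    rcases Finset.subset_singleton_iff.1 hS with rfl | rfl
    · simp only [Finset.sum_empty] at hc
      rcases hc with h1 | h1
      · exact hu0 h1
      · exact hu1 (by rw [h1, zero_add])
    · simp only [Finset.sum_singleton, id] at hc
      rcases hc with h1 | h1
      · exact huv h1
      · apply hsum; rw [h1]; linear_combination v * (two_eq_zero' (K := K))
  have hunv : u ∉ ({v} : Finset K) := by simp [huv]
  have good2 : Good ({u, v} : Finset K) := (good_insert_iff hunv).2 ⟨good1, huZ1⟩
  have card2 : ({u, v} : Finset K).card = 2 := by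
    rw [Finset.card_insert_of_notMem hunv, Finset.card_singleton]
  set A2 : Finset K := {u, v} with hA2
  -- the predicates
  set P1 : K → Prop := fun a => a ∉ Zset A2 with hP1
  set P2 : K → K → Prop := fun a b => b ∉ Zset (insert a A2) with hP2
  set P3 : K → K → K → Prop := fun a b c => c ∉ Zset (insert b (insert a A2)) with hP3
  set T : Finset (K × K × K) :=
    Finset.univ.filter (fun t => P1 t.1 ∧ P2 t.1 t.2.1 ∧ P3 t.1 t.2.1 t.2.2) with hT
  have hgood3 : ∀ a, P1 a → Good (insert a A2) ∧ (insert a A2).card = 3 := by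
    intro a ha
    have hna : a ∉ A2 := not_mem_of_not_mem_Zset ha
    exact ⟨(good_insert_iff hna).2 ⟨good2, ha⟩,
      by rw [Finset.card_insert_of_notMem hna, card2]⟩
  have hgood4 : ∀ a b, P1 a → P2 a b →
      Good (insert b (insert a A2)) ∧ (insert b (insert a A2)).card = 4 := by
    intro a b ha hb
    have hnb : b ∉ insert a A2 := not_mem_of_not_mem_Zset hb
    exact ⟨(good_insert_iff hnb).2 ⟨(hgood3 a ha).1, hb⟩,
      by rw [Finset.card_insert_of_notMem hnb, (hgood3 a ha).2]⟩
  have hgood5 : ∀ a b c, P1 a → P2 a b → P3 a b c →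
      Good (insert c (insert b (insert a A2))) ∧
        (insert c (insert b (insert a A2))).card = 5 := by
    intro a b c ha hb hc
    have hnc : c ∉ insert b (insert a A2) := not_mem_of_not_mem_Zset hc
    exact ⟨(good_insert_iff hnc).2 ⟨(hgood4 a b ha hb).1, hc⟩,
      by rw [Finset.card_insert_of_notMem hnc, (hgood4 a b ha hb).2]⟩
  -- counting T
  have h1' : (Finset.univ.filter P1).card = q - 8 := by
    have h := card_filter_not_Zset (K := K) good2
    rw [card2] at h
    norm_num at h
    exact h
  have h2' : ∀ a, P1 a → (Finset.univ.filter (fun b => P2 a b)).card = q - 16 := by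
    intro a ha
    have h := card_filter_not_Zset (K := K) (hgood3 a ha).1
    rw [(hgood3 a ha).2] at h
    norm_num at h
    exact h
  have h3' : ∀ a b, P1 a → P2 a b →
      (Finset.univ.filter (fun c => P3 a b c)).card = q - 32 := by
    intro a b ha hb
    have h := card_filter_not_Zset (K := K) (hgood4 a b ha hb).1
    rw [(hgood4 a b ha hb).2] at h
    norm_num at h
    exact h
  have hcardT : T.card = (q - 8) * ((q - 16) * (q - 32)) := by
    rw [hT, Finset.card_filter, Fintype.sum_prod_type]
    have e1 : ∀ a, P1 a → ∀ b : K, (∑ c : K, if P2 a b then (if P3 a b c then (1:ℕ) else 0) else 0) =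
        if P2 a b then q - 32 else 0 := by
      intro a ha b
      by_cases hb : P2 a b
      · rw [Finset.sum_congr rfl (fun c _ => if_pos hb), if_pos hb, ← Finset.card_filter]
        exact h3' a b ha hb
      · rw [Finset.sum_congr rfl (fun c _ => if_neg hb), if_neg hb, Finset.sum_const_zero]
    have e0 : ∀ a : K, (∑ bc : K × K,
        if P1 a ∧ P2 a bc.1 ∧ P3 a bc.1 bc.2 then (1:ℕ) else 0) =
        if P1 a then (q - 16) * (q - 32) else 0 := by
      intro a
      simp only [ite_and]
      by_cases ha : P1 a
      · rw [Finset.sum_congr rfl (fun bc _ => if_pos ha), if_pos ha, Fintype.sum_prod_type,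
          Finset.sum_congr rfl (fun b _ => e1 a ha b), ← Finset.sum_filter,
          Finset.sum_const, smul_eq_mul, h2' a ha]
      · rw [Finset.sum_congr rfl (fun bc _ => if_neg ha), if_neg ha, Finset.sum_const_zero]
    rw [Finset.sum_congr rfl (fun a _ => e0 a), ← Finset.sum_filter,
      Finset.sum_const, smul_eq_mul, h1']
  -- the blocks
  set Blocks : Finset (Finset K) := Finset.univ.filter (fun B : Finset K =>
      ((B : Set K) ⊆ {x : K | x ≠ 0 ∧ x ≠ 1}) ∧ B.card = 6 ∧ B.sum id = 1 ∧
      (∀ I ⊆ B, I.Nonempty → I ≠ B → I.sum id ≠ 1) ∧ u ∈ B ∧ v ∈ B) with hBlocks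
  have huA2 : u ∈ A2 := by rw [hA2]; exact Finset.mem_insert_self u {v}
  have hvA2 : v ∈ A2 := by rw [hA2]; exact Finset.mem_insert_of_mem (Finset.mem_singleton_self v)
  have main5 : ∀ a b c : K, P1 a → P2 a b → P3 a b c → blockOfFun A2 (a, b, c) ∈ Blocks := by
    intro a b c ha hb hc
    obtain ⟨g5, c5⟩ := hgood5 a b c ha hb hc
    set A : Finset K := insert c (insert b (insert a A2)) with hA
    have hAne : A.Nonempty := ⟨c, Finset.mem_insert_self _ _⟩
    set d : K := 1 + A.sum id with hd
    clear_value A d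
    have hsum0 : A.sum id ≠ 0 := (g5 A Finset.Subset.rfl hAne).1
    have hsum1 : A.sum id ≠ 1 := (g5 A Finset.Subset.rfl hAne).2
    have hdA : d ∉ A := by
      intro hmem
      have hsplit : A.sum id = d + (A.erase d).sum id := by
        rw [← Finset.add_sum_erase A id hmem]; rfl
      have hne' : (A.erase d).Nonempty := by
        rw [← Finset.card_pos, Finset.card_erase_of_mem hmem, c5]; norm_num
      refine (g5 _ (Finset.erase_subset _ _) hne').2 ?_
      linear_combination -hsplit + hd - (d - A.sum id) * (two_eq_zero' (K := K))
    set B : Finset K := insert d A with hB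
    have hcardB : B.card = 6 := by rw [hB, Finset.card_insert_of_notMem hdA, c5]
    have hsumB : B.sum id = 1 := by
      rw [hB, Finset.sum_insert hdA]
      show d + A.sum id = 1
      linear_combination hd + A.sum id * (two_eq_zero' (K := K))
    have hmemX : ∀ x ∈ A, x ≠ 0 ∧ x ≠ 1 := by
      intro x hx
      have := g5 {x} (Finset.singleton_subset_iff.2 hx) ⟨x, Finset.mem_singleton_self x⟩
      simpa using this
    have hd0 : d ≠ 0 := by
      intro h; apply hsum1
      linear_combination -hd + h - (two_eq_zero' (K := K))
    have hd1 : d ≠ 1 := by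
      intro h; apply hsum0
      linear_combination h - hd
    have hproper : ∀ I ⊆ B, I.Nonempty → I ≠ B → I.sum id ≠ 1 := by
      intro I hI hIne hInB
      by_cases hdI : d ∈ I
      · have hJ : (B \ I).Nonempty := by
          rw [Finset.sdiff_nonempty]
          intro hBI
          exact hInB (Finset.Subset.antisymm hI hBI)
        have hJA : B \ I ⊆ A := by
          intro x hx
          obtain ⟨hxB, hxI⟩ := Finset.mem_sdiff.1 hx
          rw [hB] at hxB
          rcases Finset.mem_insert.1 hxB with h1 | h1
          · exact absurd (h1 ▸ hdI) hxI
          · exact h1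
        have hsplit : (B \ I).sum id + I.sum id = 1 := by
          rw [Finset.sum_sdiff hI, hsumB]
        intro h1
        refine (g5 _ hJA hJ).1 ?_
        linear_combination hsplit - h1
      · have hIA : I ⊆ A := by
          intro x hx
          have hxB := hI hx
          rw [hB] at hxB
          rcases Finset.mem_insert.1 hxB with h1 | h1
          · exact absurd (h1 ▸ hx) hdI
          · exact h1
        exact (g5 I hIA hIne).2
    have hsubX : (B : Set K) ⊆ {x : K | x ≠ 0 ∧ x ≠ 1} := by
      intro x hx
      have hxB : x ∈ B := hx
      rw [hB] at hxB
      rcases Finset.mem_insert.1 hxB with h1 | h1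
      · exact h1 ▸ ⟨hd0, hd1⟩
      · exact hmemX x h1
    have huB : u ∈ B := by
      rw [hB, hA]
      exact Finset.mem_insert_of_mem (Finset.mem_insert_of_mem
        (Finset.mem_insert_of_mem (Finset.mem_insert_of_mem huA2)))
    have hvB : v ∈ B := by
      rw [hB, hA]
      exact Finset.mem_insert_of_mem (Finset.mem_insert_of_mem
        (Finset.mem_insert_of_mem (Finset.mem_insert_of_mem hvA2)))
    have hfold : blockOfFun A2 (a, b, c) = B := by
      rw [blockOfFun_mk, ← hA, ← hd, ← hB]
    rw [hfold, hBlocks]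
    exact Finset.mem_filter.2 ⟨Finset.mem_univ _, hsubX, hcardB, hsumB, hproper, huB, hvB⟩
  have hmaps : ∀ t ∈ T, blockOfFun A2 t ∈ Blocks := by
    rintro ⟨a, b, c⟩ ht
    obtain ⟨ha, hb, hc⟩ : P1 a ∧ P2 a b ∧ P3 a b c := (Finset.mem_filter.1 ht).2
    exact main5 a b c ha hb hc
  have hfib : ∀ B ∈ Blocks, (T.filter (fun t => blockOfFun A2 t = B)).card = 24 := by
    intro B hB
    rw [hBlocks, Finset.mem_filter] at hB
    obtain ⟨-, hBX, hB6, hBsum, hBproper, huB, hvB⟩ := hB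
    have hA2B : A2 ⊆ B := by
      rw [hA2]
      exact Finset.insert_subset_iff.2 ⟨huB, Finset.singleton_subset_iff.2 hvB⟩
    set C : Finset K := B \ A2 with hC
    have hCcard : C.card = 4 := by rw [hC, Finset.card_sdiff_of_subset hA2B, hB6, card2]
    have hchar : ∀ a b c : K, ((a, b, c) ∈ T ∧ blockOfFun A2 (a, b, c) = B) ↔
        (a ∈ C ∧ b ∈ C ∧ c ∈ C ∧ a ≠ b ∧ a ≠ c ∧ b ≠ c) := by
      intro a b c
      constructor
      · rintro ⟨htT, hfB⟩
        obtain ⟨ha, hb, hc⟩ : P1 a ∧ P2 a b ∧ P3 a b c := (Finset.mem_filter.1 htT).2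
        have hna : a ∉ A2 := not_mem_of_not_mem_Zset ha
        have hnb : b ∉ insert a A2 := not_mem_of_not_mem_Zset hb
        have hnc : c ∉ insert b (insert a A2) := not_mem_of_not_mem_Zset hc
        have hsubB : insert c (insert b (insert a A2)) ⊆ B := by
          rw [← hfB, blockOfFun_mk]
          exact Finset.subset_insert _ _
        have haB : a ∈ B := hsubB (Finset.mem_insert_of_mem (Finset.mem_insert_of_mem
          (Finset.mem_insert_self a A2)))
        have hbB : b ∈ B := hsubB (Finset.mem_insert_of_mem (Finset.mem_insert_self b _))
        have hcB : c ∈ B := hsubB (Finset.mem_insert_self c _)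
        have hb' : b ≠ a ∧ b ∉ A2 := by simpa [Finset.mem_insert] using hnb
        have hc' : ¬(c = b ∨ c = a ∨ c ∈ A2) := by simpa [Finset.mem_insert] using hnc
        push_neg at hc'
        exact ⟨Finset.mem_sdiff.2 ⟨haB, hna⟩, Finset.mem_sdiff.2 ⟨hbB, hb'.2⟩,
          Finset.mem_sdiff.2 ⟨hcB, hc'.2.2⟩, Ne.symm hb'.1, Ne.symm hc'.2.1, Ne.symm hc'.1⟩
      · rintro ⟨haC, hbC, hcC, hab, hac, hbc⟩
        rw [hC] at haC hbC hcC
        obtain ⟨haB, hna⟩ := Finset.mem_sdiff.1 haC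
        obtain ⟨hbB, hnbA2⟩ := Finset.mem_sdiff.1 hbC
        obtain ⟨hcB, hncA2⟩ := Finset.mem_sdiff.1 hcC
        have hnb : b ∉ insert a A2 := by
          intro h
          rcases Finset.mem_insert.1 h with h1 | h1
          · exact hab h1.symm
          · exact hnbA2 h1
        have hnc : c ∉ insert b (insert a A2) := by
          intro h
          rcases Finset.mem_insert.1 h with h1 | h1
          · exact hbc h1.symm
          · rcases Finset.mem_insert.1 h1 with h2 | h2
            · exact hac h2.symm
            · exact hncA2 h2
        set A : Finset K := insert c (insert b (insert a A2)) with hA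
        clear_value A
        have hAB : A ⊆ B := by
          rw [hA]
          refine Finset.insert_subset_iff.2 ⟨hcB, Finset.insert_subset_iff.2 ⟨hbB,
            Finset.insert_subset_iff.2 ⟨haB, hA2B⟩⟩⟩
        have hcard5 : A.card = 5 := by
          rw [hA, Finset.card_insert_of_notMem hnc, Finset.card_insert_of_notMem hnb,
            Finset.card_insert_of_notMem hna, card2]
        have g5 : Good A := by
          intro S hS hne
          have hSB : S ⊆ B := hS.trans hAB
          have hSsmall : S.card ≤ 5 := hcard5 ▸ Finset.card_le_card hS
          have hSneB : S ≠ B := by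
            intro h; rw [h, hB6] at hSsmall; omega
          refine ⟨?_, hBproper S hSB hne hSneB⟩
          intro h0
          have hJne : (B \ S).Nonempty := by
            rw [Finset.sdiff_nonempty]
            intro hBS
            exact hSneB (Finset.Subset.antisymm hSB hBS)
          have hJneB : B \ S ≠ B := by
            obtain ⟨x, hx⟩ := hne
            intro h
            have hx2 : x ∈ B \ S := h.symm ▸ hSB hx
            exact (Finset.mem_sdiff.1 hx2).2 hx
          refine hBproper (B \ S) Finset.sdiff_subset hJne hJneB ?_
          have hsplit : (B \ S).sum id + S.sum id = 1 := by
            rw [Finset.sum_sdiff hSB, hBsum]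
          linear_combination hsplit - h0
        have hs1 : insert a A2 ⊆ A := by
          rw [hA]
          exact (Finset.subset_insert _ _).trans (Finset.subset_insert _ _)
        have hs2 : insert b (insert a A2) ⊆ A := by
          rw [hA]
          exact Finset.subset_insert _ _
        have hmemT : (a, b, c) ∈ T := by
          refine Finset.mem_filter.2 ⟨Finset.mem_univ _, ?_, ?_, ?_⟩
          · exact ((good_insert_iff hna).1 (good_mono hs1 g5)).2
          · exact ((good_insert_iff hnb).1 (good_mono hs2 g5)).2
          · exact ((good_insert_iff hnc).1 (hA ▸ g5)).2
        have hd1card : (B \ A).card = 1 := by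
          rw [Finset.card_sdiff_of_subset hAB, hB6, hcard5]
        obtain ⟨e, he⟩ := Finset.card_eq_one.1 hd1card
        have henA : e ∉ A := by
          have he2 : e ∈ B \ A := by rw [he]; exact Finset.mem_singleton_self e
          exact (Finset.mem_sdiff.1 he2).2
        have heB : B = insert e A := by
          have h1 : A ∪ B \ A = B := Finset.union_sdiff_of_subset hAB
          rw [he] at h1
          rw [← h1, Finset.insert_eq, Finset.union_comm]
        have hesum : e + A.sum id = 1 := by
          have h2 := hBsum
          rw [heB, Finset.sum_insert henA] at h2
          exact h2
        have hfold : blockOfFun A2 (a, b, c) = B := by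
          rw [blockOfFun_mk, ← hA, heB]
          congr 1
          linear_combination -hesum + A.sum id * (two_eq_zero' (K := K))
        exact ⟨hmemT, hfold⟩
    have hfibeq : T.filter (fun t => blockOfFun A2 t = B) =
        C.biUnion (fun a => (C.erase a).biUnion (fun b =>
          ((C.erase a).erase b).image (fun c => (a, b, c)))) := by
      ext t
      obtain ⟨a, b, c⟩ := t
      rw [Finset.mem_filter, hchar a b c]
      simp only [Finset.mem_biUnion, Finset.mem_image, Finset.mem_erase]
      constructor
      · rintro ⟨haC, hbC, hcC, hab, hac, hbc⟩
        exact ⟨a, haC, b, ⟨Ne.symm hab, hbC⟩, c, ⟨Ne.symm hbc, Ne.symm hac, hcC⟩, rfl⟩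
      · rintro ⟨a', ha', b', ⟨hba, hb'⟩, c', ⟨hcb, hca, hc'⟩, heq⟩
        simp only [Prod.mk.injEq] at heq
        obtain ⟨rfl, rfl, rfl⟩ := heq
        exact ⟨ha', hb', hc', Ne.symm hba, Ne.symm hca, Ne.symm hcb⟩
    have hdisjouter : ∀ a1 ∈ C, ∀ a2 ∈ C, a1 ≠ a2 →
        Disjoint ((C.erase a1).biUnion (fun b => ((C.erase a1).erase b).image (fun c => (a1, b, c))))
          ((C.erase a2).biUnion (fun b => ((C.erase a2).erase b).image (fun c => (a2, b, c)))) := by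
      intro a1 _ a2 _ hne
      rw [Finset.disjoint_left]
      intro t ht1 ht2
      simp only [Finset.mem_biUnion, Finset.mem_image] at ht1 ht2
      obtain ⟨b1, -, c1, -, rfl⟩ := ht1
      obtain ⟨b2, -, c2, -, he2⟩ := ht2
      simp only [Prod.mk.injEq] at he2
      exact hne he2.1.symm
    have houter : ∀ a ∈ C, ((C.erase a).biUnion (fun b =>
        ((C.erase a).erase b).image (fun c => (a, b, c)))).card = 6 := by
      intro a haC
      have hdisjinner : ∀ b1 ∈ C.erase a, ∀ b2 ∈ C.erase a, b1 ≠ b2 →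
          Disjoint (((C.erase a).erase b1).image (fun c => (a, b1, c)))
            (((C.erase a).erase b2).image (fun c => (a, b2, c))) := by
        intro b1 _ b2 _ hne
        rw [Finset.disjoint_left]
        intro t ht1 ht2
        simp only [Finset.mem_image] at ht1 ht2
        obtain ⟨c1, -, rfl⟩ := ht1
        obtain ⟨c2, -, he2⟩ := ht2
        simp only [Prod.mk.injEq] at he2
        exact hne he2.2.1.symm
      rw [Finset.card_biUnion hdisjinner]
      have hin : ∀ b ∈ C.erase a, (((C.erase a).erase b).image (fun c => (a, b, c))).card = 2 := by
        intro b hb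
        have hinj : Function.Injective (fun c : K => (a, b, c)) := by
          intro x y h
          simpa using h
        rw [Finset.card_image_of_injective _ hinj, Finset.card_erase_of_mem hb,
          Finset.card_erase_of_mem haC, hCcard]
      rw [Finset.sum_congr rfl hin, Finset.sum_const, smul_eq_mul,
        Finset.card_erase_of_mem haC, hCcard]
    rw [hfibeq, Finset.card_biUnion hdisjouter, Finset.sum_congr rfl houter,
      Finset.sum_const, smul_eq_mul, hCcard]
  have hTsum : T.card = ∑ B ∈ Blocks, (T.filter (fun t => blockOfFun A2 t = B)).card :=
    Finset.card_eq_sum_card_fiberwise hmaps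
  rw [Finset.sum_congr rfl hfib, Finset.sum_const, smul_eq_mul] at hTsum
  rw [← hTsum, hcardT, mul_assoc]

end Aux

/-- For `m ≥ 6` and distinct `u, v ∈ X` with `u + v ≠ 1`, exactly `λ_6 = (2^m-8)(2^m-16)(2^m-32)/4!`
blocks of `W_6` contain both `u` and `v`; that is, `(X, W_2, W_6)` is a
`GDD(2^m - 2, 2, 6)` with balance parameter `λ_6`. -/
theorem GDD_W6 (m : ℕ) (hm : 6 ≤ m) (u v : GaloisField 2 m)
    (hu : u ∈ designX m) (hv : v ∈ designX m) (huv : u ≠ v) (hsum : u + v ≠ 1) :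
    {B ∈ designW m 6 | u ∈ B ∧ v ∈ B}.ncard = (2 ^ m - 8) * (2 ^ m - 16) * (2 ^ m - 32) / Nat.factorial 4 := by
  classical
  haveI : Fintype (GaloisField 2 m) := Fintype.ofFinite _
  obtain ⟨hu0, hu1⟩ := hu
  obtain ⟨hv0, hv1⟩ := hv
  have key := blocks_card (K := GaloisField 2 m) u v hu0 hu1 hv0 hv1 huv hsum
  have hq : Fintype.card (GaloisField 2 m) = 2 ^ m := by
    rw [← Nat.card_eq_fintype_card]; exact GaloisField.card 2 m (by omega)
  rw [hq] at key
  have hset : {B ∈ designW m 6 | u ∈ B ∧ v ∈ B} =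
      ↑(Finset.univ.filter (fun B : Finset (GaloisField 2 m) =>
        ((B : Set (GaloisField 2 m)) ⊆ {x : GaloisField 2 m | x ≠ 0 ∧ x ≠ 1}) ∧
        B.card = 6 ∧ B.sum id = 1 ∧
        (∀ I ⊆ B, I.Nonempty → I ≠ B → I.sum id ≠ 1) ∧ u ∈ B ∧ v ∈ B)) := by
    ext B
    simp only [Set.mem_setOf_eq, Set.mem_sep_iff, designW, designX, Finset.mem_coe,
      Finset.coe_filter, Finset.mem_filter, Finset.mem_univ, true_and]
    tauto
  rw [hset, Set.ncard_coe_finset]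
  have h24 : Nat.factorial 4 = 24 := rfl
  rw [h24]
  rw [← key, Nat.mul_div_cancel _ (by norm_num : 0 < 24)]
  apply congrArg Finset.card
  ext B
  simp only [Finset.mem_filter]
end
end

section
/- Suppose m ≥ 6. Then every element x ∈ X is contained in exactly r_6 = (2^m − 4)(2^m − 8)(2^m − 16)(2^m − 32)/5! blocks of W_6, and the total number of blocks is |W_6| = (2^m − 2)(2^m − 4)(2^m − 8)(2^m − 16)(2^m − 32)/6!. -/
open scoped Classical

noncomputable section

section Aux
variable {F : Type*} [Field F] [CharP F 2] [DecidableEq F]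

def good (A : Finset F) : Prop := ∀ I ⊆ A, I.Nonempty → I.sum id ≠ 0 ∧ I.sum id ≠ 1

lemma sum_sdiff_char2 {A I : Finset F} (h : I ⊆ A) :
    (A \ I).sum id = A.sum id + I.sum id := by
  rw [← Finset.sum_sdiff (f := id) h, add_assoc, CharTwo.add_self_eq_zero, add_zero]

lemma good_key {A I J : Finset F} (hA : good A) (hI : I ⊆ A) (hJ : J ⊆ A) :
    (I.sum id + J.sum id = 0 → I = J) ∧ I.sum id + J.sum id ≠ 1 := by
  have hdisj : Disjoint (I \ J) (J \ I) := disjoint_sdiff_sdiff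
  have e1 : (I \ J).sum id + (I ∩ J).sum id = I.sum id := by
    rw [← Finset.sdiff_inter_self_left I J]
    exact Finset.sum_sdiff Finset.inter_subset_left
  have e2 : (J \ I).sum id + (I ∩ J).sum id = J.sum id := by
    rw [Finset.inter_comm I J, ← Finset.sdiff_inter_self_left J I]
    exact Finset.sum_sdiff Finset.inter_subset_left
  have e3 : (I ∩ J).sum id + (I ∩ J).sum id = (0 : F) := CharTwo.add_self_eq_zero _
  have hsum : I.sum id + J.sum id = ((I \ J) ∪ (J \ I)).sum id := by
    rw [Finset.sum_union hdisj]; linear_combination e3 - e1 - e2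
  have hsub : (I \ J) ∪ (J \ I) ⊆ A :=
    Finset.union_subset (Finset.sdiff_subset.trans hI) (Finset.sdiff_subset.trans hJ)
  constructor
  · intro h0
    by_contra hne
    have hne' : ((I \ J) ∪ (J \ I)).Nonempty := by
      rw [Finset.nonempty_iff_ne_empty]
      intro hc
      rw [Finset.union_eq_empty] at hc
      simp only [Finset.sdiff_eq_empty_iff_subset] at hc
      exact hne (Finset.Subset.antisymm hc.1 hc.2)
    exact (hA _ hsub hne').1 (hsum ▸ h0)
  · intro h1
    rw [hsum] at h1
    rcases Finset.eq_empty_or_nonempty ((I \ J) ∪ (J \ I)) with he | hne'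
    · rw [he, Finset.sum_empty] at h1; exact zero_ne_one h1
    · exact (hA _ hsub hne').2 h1

def forb (A : Finset F) : Finset F :=
  A.powerset.image (fun I => I.sum id) ∪ A.powerset.image (fun I => I.sum id + 1)

lemma mem_forb {A : Finset F} {a : F} :
    a ∈ forb A ↔ (∃ I ⊆ A, I.sum id = a) ∨ ∃ I ⊆ A, I.sum id + 1 = a := by
  simp [forb, Finset.mem_union, Finset.mem_image, Finset.mem_powerset]

lemma self_mem_forb {A : Finset F} {a : F} (ha : a ∈ A) : a ∈ forb A := by
  rw [mem_forb]
  exact Or.inl ⟨{a}, Finset.singleton_subset_iff.mpr ha, Finset.sum_singleton id a⟩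

lemma card_forb {A : Finset F} (hA : good A) : (forb A).card = 2 ^ (A.card + 1) := by
  have hinj : Set.InjOn (fun I : Finset F => I.sum id) A.powerset := by
    intro I hI J hJ h
    simp only [Finset.mem_coe, Finset.mem_powerset] at hI hJ
    refine (good_key hA hI hJ).1 ?_
    simp only at h
    rw [h, CharTwo.add_self_eq_zero]
  have hinj2 : Set.InjOn (fun I : Finset F => I.sum id + 1) A.powerset := by
    intro I hI J hJ h
    simp only [add_left_inj] at h
    exact hinj hI hJ h
  have hdisj : Disjoint (A.powerset.image (fun I => I.sum id))
      (A.powerset.image (fun I => I.sum id + 1)) := by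
    rw [Finset.disjoint_left]
    rintro a ha hb
    simp only [Finset.mem_image, Finset.mem_powerset] at ha hb
    obtain ⟨I, hI, hIa⟩ := ha
    obtain ⟨J, hJ, hJa⟩ := hb
    refine (good_key hA hI hJ).2 ?_
    rw [hIa, ← hJa]
    linear_combination CharTwo.add_self_eq_zero (J.sum id)
  rw [forb, Finset.card_union_of_disjoint hdisj, Finset.card_image_of_injOn hinj,
    Finset.card_image_of_injOn hinj2, Finset.card_powerset, pow_succ]
  ring

lemma good_insert {A : Finset F} {a : F} (hA : good A) (ha : a ∉ forb A) :
    a ∉ A ∧ good (insert a A) := by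
  have haA : a ∉ A := fun h => ha (self_mem_forb h)
  refine ⟨haA, fun I hI hne => ?_⟩
  by_cases hai : a ∈ I
  · have hJ : I.erase a ⊆ A := Finset.subset_insert_iff.mp hI
    have hsum : I.sum id = a + (I.erase a).sum id := (Finset.add_sum_erase I id hai).symm
    constructor
    · intro h0
      refine ha (mem_forb.mpr (Or.inl ⟨I.erase a, hJ, ?_⟩))
      rw [hsum] at h0
      have two : (2 : F) = 0 := CharP.cast_eq_zero F 2
      linear_combination h0 - two * a
    · intro h1
      refine ha (mem_forb.mpr (Or.inr ⟨I.erase a, hJ, ?_⟩))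
      rw [hsum] at h1
      have two : (2 : F) = 0 := CharP.cast_eq_zero F 2
      linear_combination (I.erase a).sum id * two - h1
  · have : I ⊆ A := by
      intro x hx
      rcases Finset.mem_insert.mp (hI hx) with h | h
      · exact absurd (h ▸ hx) hai
      · exact h
    exact hA I this hne

lemma good_erase {A : Finset F} {a : F} (hA : good A) (ha : a ∈ A) :
    good (A.erase a) ∧ a ∉ forb (A.erase a) := by
  have hgood : good (A.erase a) := fun I hI hne => hA I (hI.trans (Finset.erase_subset a A)) hne
  refine ⟨hgood, fun hf => ?_⟩
  rcases mem_forb.mp hf with ⟨I, hI, hIa⟩ | ⟨I, hI, hIa⟩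
  · have haI : a ∉ I := fun h => Finset.notMem_erase a A (hI h)
    have hJ : insert a I ⊆ A := Finset.insert_subset ha (hI.trans (Finset.erase_subset a A))
    refine (hA _ hJ (Finset.insert_nonempty a I)).1 ?_
    rw [Finset.sum_insert haI, ← hIa]
    exact CharTwo.add_self_eq_zero _
  · have haI : a ∉ I := fun h => Finset.notMem_erase a A (hI h)
    have hJ : insert a I ⊆ A := Finset.insert_subset ha (hI.trans (Finset.erase_subset a A))
    refine (hA _ hJ (Finset.insert_nonempty a I)).2 ?_
    rw [Finset.sum_insert haI, ← hIa]
    have two : (2 : F) = 0 := CharP.cast_eq_zero F 2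
    simp only [id_eq]
    linear_combination (∑ x ∈ I, x) * two
section Count
variable [Fintype F]

def GD (D : Finset F) (k : ℕ) : Finset (Finset F) :=
  Finset.univ.filter (fun A => good A ∧ A.card = k ∧ D ⊆ A)

lemma mem_GD {D : Finset F} {k : ℕ} {A : Finset F} :
    A ∈ GD D k ↔ good A ∧ A.card = k ∧ D ⊆ A := by simp [GD]

lemma step (D : Finset F) (k : ℕ) :
    (k + 1 - D.card) * (GD D (k + 1)).card =
      (GD D k).card * (Fintype.card F - 2 ^ (k + 1)) := by
  have key : ((GD D (k + 1)).sigma (fun A => A \ D)).card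
      = ((GD D k).sigma (fun A => (forb A)ᶜ)).card := by
    apply Finset.card_nbij' (fun p => ⟨p.1.erase p.2, p.2⟩)
      (fun p => ⟨insert p.2 p.1, p.2⟩)
    · rintro ⟨A, a⟩ hp
      rw [Finset.mem_coe, Finset.mem_sigma] at hp ⊢
      obtain ⟨hA, ha⟩ := hp
      rw [mem_GD] at hA
      rw [Finset.mem_sdiff] at ha
      obtain ⟨hge, hnf⟩ := good_erase hA.1 ha.1
      refine ⟨mem_GD.mpr ⟨hge, ?_, ?_⟩, ?_⟩
      · rw [Finset.card_erase_of_mem ha.1, hA.2.1]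
        omega
      · intro d hd
        exact Finset.mem_erase.mpr ⟨fun h => ha.2 (h ▸ hd), hA.2.2 hd⟩
      · simpa using hnf
    · rintro ⟨A, a⟩ hp
      rw [Finset.mem_coe, Finset.mem_sigma] at hp ⊢
      obtain ⟨hA, ha⟩ := hp
      rw [mem_GD] at hA
      rw [Finset.mem_compl] at ha
      obtain ⟨hnA, hgi⟩ := good_insert hA.1 ha
      have haD : a ∉ D := fun h => ha (self_mem_forb (hA.2.2 h))
      refine ⟨mem_GD.mpr ⟨hgi, ?_, ?_⟩, ?_⟩
      · rw [Finset.card_insert_of_notMem hnA, hA.2.1]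
      · exact hA.2.2.trans (Finset.subset_insert a A)
      · exact Finset.mem_sdiff.mpr ⟨Finset.mem_insert_self a A, haD⟩
    · rintro ⟨A, a⟩ hp
      rw [Finset.mem_coe, Finset.mem_sigma, Finset.mem_sdiff] at hp
      simp only [Finset.insert_erase hp.2.1]
    · rintro ⟨A, a⟩ hp
      rw [Finset.mem_coe, Finset.mem_sigma, Finset.mem_compl] at hp
      have hnA : a ∉ A := fun h => hp.2 (self_mem_forb h)
      simp only [Finset.erase_insert hnA]
  rw [Finset.card_sigma, Finset.card_sigma] at key
  have l1 : ∑ A ∈ GD D (k + 1), (A \ D).card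
      = (GD D (k + 1)).card * (k + 1 - D.card) := by
    rw [Finset.sum_congr rfl (fun A hA => ?_), Finset.sum_const, smul_eq_mul]
    rw [mem_GD] at hA
    rw [Finset.card_sdiff_of_subset hA.2.2, hA.2.1]
  have l2 : ∑ A ∈ GD D k, ((forb A)ᶜ).card
      = (GD D k).card * (Fintype.card F - 2 ^ (k + 1)) := by
    rw [Finset.sum_congr rfl (fun A hA => ?_), Finset.sum_const, smul_eq_mul]
    rw [mem_GD] at hA
    rw [Finset.card_compl, card_forb hA.1, hA.2.1]
  rw [l1, l2] at key
  rw [mul_comm] at key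
  exact key

lemma GD_empty_zero : (GD (∅ : Finset F) 0).card = 1 := by
  have : GD (∅ : Finset F) 0 = {∅} := by
    ext A
    simp only [mem_GD, Finset.mem_singleton, Finset.card_eq_zero, Finset.empty_subset, and_true]
    constructor
    · rintro ⟨-, h⟩; exact h
    · rintro rfl
      refine ⟨fun I hI hne => absurd (Finset.subset_empty.mp hI) hne.ne_empty, rfl⟩
  rw [this, Finset.card_singleton]

lemma GD_singleton_one {x : F} (hx0 : x ≠ 0) (hx1 : x ≠ 1) :
    (GD ({x} : Finset F) 1).card = 1 := by
  have : GD ({x} : Finset F) 1 = {{x}} := by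
    ext A
    simp only [mem_GD, Finset.mem_singleton, Finset.singleton_subset_iff]
    constructor
    · rintro ⟨-, hc, hx⟩
      obtain ⟨a, rfl⟩ := Finset.card_eq_one.mp hc
      rw [Finset.mem_singleton] at hx
      rw [hx]
    · rintro rfl
      refine ⟨fun I hI hne => ?_, Finset.card_singleton x, Finset.mem_singleton_self x⟩
      rw [(Finset.subset_singleton_iff.mp hI).resolve_left hne.ne_empty]
      simpa using ⟨hx0, hx1⟩
  rw [this, Finset.card_singleton]

end Count
lemma good_five_extend {A : Finset F} (hA : good A) (hc : A.card = 5) :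
    (1 + A.sum id) ∉ A ∧ (insert (1 + A.sum id) A).card = 6 ∧
      (insert (1 + A.sum id) A).sum id = 1 ∧
      ∀ a ∈ insert (1 + A.sum id) A, good ((insert (1 + A.sum id) A).erase a) := by
  have two : (2 : F) = 0 := CharP.cast_eq_zero F 2
  set b := 1 + A.sum id with hb
  have hbA : b ∉ A := by
    intro hmem
    have hne : (A.erase b).Nonempty := by
      rw [← Finset.card_pos, Finset.card_erase_of_mem hmem, hc]; norm_num
    have hsum : b + (A.erase b).sum id = A.sum id := Finset.add_sum_erase A id hmem
    refine (hA _ (Finset.erase_subset b A) hne).2 ?_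
    linear_combination hsum - hb - two
  have hcard : (insert b A).card = 6 := by
    rw [Finset.card_insert_of_notMem hbA, hc]
  have hsum : (insert b A).sum id = 1 := by
    rw [Finset.sum_insert hbA]
    simp only [id_eq]
    have hAs : (∑ x ∈ A, (x : F)) = A.sum id := rfl
    rw [hAs, hb]
    linear_combination A.sum id * two
  refine ⟨hbA, hcard, hsum, fun a ha => ?_⟩
  rcases Finset.mem_insert.mp ha with rfl | haA
  · rw [Finset.erase_insert hbA]; exact hA
  · have hab : a ≠ b := fun h => hbA (h ▸ haA)
    rw [Finset.erase_insert_of_ne hab.symm]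
    intro I hI hne
    by_cases hbI : b ∈ I
    · have hJ : I.erase b ⊆ A.erase a := Finset.subset_insert_iff.mp hI
      have hJA : I.erase b ⊆ A := hJ.trans (Finset.erase_subset a A)
      have hIs : I.sum id = b + (I.erase b).sum id := (Finset.add_sum_erase I id hbI).symm
      have hAd : (A \ I.erase b).sum id = A.sum id + (I.erase b).sum id :=
        sum_sdiff_char2 hJA
      have hAne : (A \ I.erase b).Nonempty :=
        ⟨a, Finset.mem_sdiff.mpr ⟨haA, fun h => Finset.notMem_erase a A (hJ h)⟩⟩
      have hgood := hA _ Finset.sdiff_subset hAne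
      constructor
      · intro h0
        refine hgood.2 ?_
        linear_combination hAd - hIs + h0 - hb - two
      · intro h1
        refine hgood.1 ?_
        linear_combination hAd - hIs + h1 - hb
    · have : I ⊆ A := (Finset.subset_insert_iff_of_notMem hbI).mp hI |>.trans
        (Finset.erase_subset a A)
      exact hA I this hne

section Count2
variable [Fintype F]

def WD (D : Finset F) : Finset (Finset F) :=
  Finset.univ.filter
    (fun B => B.card = 6 ∧ B.sum id = 1 ∧ (∀ a ∈ B, good (B.erase a)) ∧ D ⊆ B)

lemma mem_WD {D B : Finset F} :
    B ∈ WD D ↔ B.card = 6 ∧ B.sum id = 1 ∧ (∀ a ∈ B, good (B.erase a)) ∧ D ⊆ B := by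
  simp [WD]

lemma blockstep (D : Finset F) :
    (6 - D.card) * (WD D).card = (GD D 5).card := by
  have two : (2 : F) = 0 := CharP.cast_eq_zero F 2
  have key : ((WD D).sigma (fun B => B \ D)).card = (GD D 5).card := by
    apply Finset.card_nbij' (fun p => p.1.erase p.2)
      (fun A => ⟨insert (1 + A.sum id) A, 1 + A.sum id⟩)
    · rintro ⟨B, a⟩ hp
      rw [Finset.mem_coe, Finset.mem_sigma] at hp
      obtain ⟨hB, ha⟩ := hp
      rw [mem_WD] at hB
      rw [Finset.mem_sdiff] at ha
      refine mem_GD.mpr ⟨hB.2.2.1 a ha.1, ?_, ?_⟩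
      · rw [Finset.card_erase_of_mem ha.1, hB.1]
      · intro d hd
        exact Finset.mem_erase.mpr ⟨fun h => ha.2 (h ▸ hd), hB.2.2.2 hd⟩
    · intro A hA
      rw [Finset.mem_coe, mem_GD] at hA
      obtain ⟨hbA, hcard, hsum, hgood⟩ := good_five_extend hA.1 hA.2.1
      rw [Finset.mem_coe, Finset.mem_sigma]
      constructor
      · exact mem_WD.mpr ⟨hcard, hsum, hgood,
          hA.2.2.trans (Finset.subset_insert _ A)⟩
      · exact Finset.mem_sdiff.mpr ⟨Finset.mem_insert_self _ A,
          fun h => hbA (hA.2.2 h)⟩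
    · rintro ⟨B, a⟩ hp
      rw [Finset.mem_coe, Finset.mem_sigma] at hp
      obtain ⟨hB, ha⟩ := hp
      rw [mem_WD] at hB
      rw [Finset.mem_sdiff] at ha
      have hs : a + (B.erase a).sum id = B.sum id := Finset.add_sum_erase B id ha.1
      have hba : 1 + (B.erase a).sum id = a := by
        linear_combination hs - hB.2.1 - a * two + B.sum id * two
      simp only [hba, Finset.insert_erase ha.1]
    · intro A hA
      rw [Finset.mem_coe, mem_GD] at hA
      obtain ⟨hbA, -, -, -⟩ := good_five_extend hA.1 hA.2.1
      simp only [Finset.erase_insert hbA]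
  rw [Finset.card_sigma] at key
  have l1 : ∑ B ∈ WD D, (B \ D).card = (WD D).card * (6 - D.card) := by
    rw [Finset.sum_congr rfl (fun B hB => ?_), Finset.sum_const, smul_eq_mul]
    rw [mem_WD] at hB
    rw [Finset.card_sdiff_of_subset hB.2.2.2, hB.1]
  rw [l1, mul_comm] at key
  exact key

end Count2
lemma designW_iff {B : Finset F} :
    ((B : Set F) ⊆ {x | x ≠ 0 ∧ x ≠ 1} ∧ B.card = 6 ∧ B.sum id = 1 ∧
      ∀ I ⊆ B, I.Nonempty → I ≠ B → I.sum id ≠ 1)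
    ↔ (B.card = 6 ∧ B.sum id = 1 ∧ ∀ a ∈ B, good (B.erase a)) := by
  constructor
  · rintro ⟨hX, hc, hs, hns⟩
    refine ⟨hc, hs, fun a ha I hI hne => ?_⟩
    have hIB : I ⊆ B := hI.trans (Finset.erase_subset a B)
    have haI : a ∉ I := fun h => Finset.notMem_erase a B (hI h)
    have hInB : I ≠ B := fun h => haI (h ▸ ha)
    refine ⟨?_, hns I hIB hne hInB⟩
    intro h0
    have hd : (B \ I).sum id = B.sum id + I.sum id := sum_sdiff_char2 hIB
    rw [hs, h0, add_zero] at hd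
    obtain ⟨e, he⟩ := hne
    have heB : e ∈ B := hIB he
    have henB : e ∉ B \ I := fun h => (Finset.mem_sdiff.mp h).2 he
    exact hns (B \ I) Finset.sdiff_subset
      ⟨a, Finset.mem_sdiff.mpr ⟨ha, haI⟩⟩ (fun h => henB (by rw [h]; exact heB)) hd
  · rintro ⟨hc, hs, hg⟩
    refine ⟨?_, hc, hs, ?_⟩
    · intro a haB
      rw [Finset.mem_coe] at haB
      obtain ⟨b, hbB, hba⟩ := Finset.exists_mem_ne (by rw [hc]; norm_num) a
      have h1 : {a} ⊆ B.erase b := Finset.singleton_subset_iff.mpr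
        (Finset.mem_erase.mpr ⟨fun h => hba h.symm, haB⟩)
      have := hg b hbB {a} h1 (Finset.singleton_nonempty a)
      rw [Finset.sum_singleton] at this
      exact this
    · intro I hIB hne hInB
      obtain ⟨a, haB, haI⟩ := Finset.exists_of_ssubset (hIB.ssubset_of_ne hInB)
      have hI : I ⊆ B.erase a := fun x hx =>
        Finset.mem_erase.mpr ⟨fun h => haI (h ▸ hx), hIB hx⟩
      exact (hg a haB I hI hne).2

section Count3
variable [Fintype F]

lemma count_all :
    720 * (WD (∅ : Finset F)).card =
      (Fintype.card F - 2) * (Fintype.card F - 4) * (Fintype.card F - 8) *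
        (Fintype.card F - 16) * (Fintype.card F - 32) := by
  set q := Fintype.card F
  have h0 := GD_empty_zero (F := F)
  have h1 := step (∅ : Finset F) 0
  have h2 := step (∅ : Finset F) 1
  have h3 := step (∅ : Finset F) 2
  have h4 := step (∅ : Finset F) 3
  have h5 := step (∅ : Finset F) 4
  have hb := blockstep (∅ : Finset F)
  norm_num [Finset.card_empty] at h1 h2 h3 h4 h5 hb
  rw [h0, one_mul] at h1
  calc 720 * (WD (∅ : Finset F)).card
      = 120 * (6 * (WD (∅ : Finset F)).card) := by ring
    _ = 120 * (GD (∅ : Finset F) 5).card := by rw [hb]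
    _ = 24 * (5 * (GD (∅ : Finset F) 5).card) := by ring
    _ = 24 * ((GD (∅ : Finset F) 4).card * (q - 32)) := by rw [h5]
    _ = 6 * (4 * (GD (∅ : Finset F) 4).card) * (q - 32) := by ring
    _ = 6 * ((GD (∅ : Finset F) 3).card * (q - 16)) * (q - 32) := by rw [h4]
    _ = 2 * (3 * (GD (∅ : Finset F) 3).card) * (q - 16) * (q - 32) := by ring
    _ = 2 * ((GD (∅ : Finset F) 2).card * (q - 8)) * (q - 16) * (q - 32) := by rw [h3]
    _ = 2 * (GD (∅ : Finset F) 2).card * (q - 8) * (q - 16) * (q - 32) := by ring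
    _ = (GD (∅ : Finset F) 1).card * (q - 4) * (q - 8) * (q - 16) * (q - 32) := by rw [h2]
    _ = (q - 2) * (q - 4) * (q - 8) * (q - 16) * (q - 32) := by rw [h1]

lemma count_x {x : F} (hx0 : x ≠ 0) (hx1 : x ≠ 1) :
    120 * (WD ({x} : Finset F)).card =
      (Fintype.card F - 4) * (Fintype.card F - 8) *
        (Fintype.card F - 16) * (Fintype.card F - 32) := by
  set q := Fintype.card F
  have h1 := GD_singleton_one hx0 hx1
  have h2 := step ({x} : Finset F) 1
  have h3 := step ({x} : Finset F) 2
  have h4 := step ({x} : Finset F) 3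
  have h5 := step ({x} : Finset F) 4
  have hb := blockstep ({x} : Finset F)
  norm_num [Finset.card_singleton] at h2 h3 h4 h5 hb
  calc 120 * (WD ({x} : Finset F)).card
      = 24 * (5 * (WD ({x} : Finset F)).card) := by ring
    _ = 24 * (GD ({x} : Finset F) 5).card := by rw [hb]
    _ = 6 * (4 * (GD ({x} : Finset F) 5).card) := by ring
    _ = 6 * ((GD ({x} : Finset F) 4).card * (q - 32)) := by rw [h5]
    _ = 2 * (3 * (GD ({x} : Finset F) 4).card) * (q - 32) := by ring
    _ = 2 * ((GD ({x} : Finset F) 3).card * (q - 16)) * (q - 32) := by rw [h4]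
    _ = 2 * (GD ({x} : Finset F) 3).card * (q - 16) * (q - 32) := by ring
    _ = (GD ({x} : Finset F) 2).card * (q - 8) * (q - 16) * (q - 32) := by rw [h3]
    _ = (q - 4) * (q - 8) * (q - 16) * (q - 32) := by rw [h2, h1, one_mul]

end Count3
end Aux
/-- For `m ≥ 6`, every `x ∈ X` lies in exactly `r_6` blocks of `W_6`, and the total
number of blocks is `|W_6| = b_6`. -/
theorem repetition_and_block_numbers_W6 (m : ℕ) (hm : 6 ≤ m) :
    (∀ x ∈ designX m, {B ∈ designW m 6 | x ∈ B}.ncard = (2 ^ m - 4) * (2 ^ m - 8) * (2 ^ m - 16) * (2 ^ m - 32) / Nat.factorial 5) ∧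
    (designW m 6).ncard = (2 ^ m - 2) * (2 ^ m - 4) * (2 ^ m - 8) * (2 ^ m - 16) * (2 ^ m - 32) / Nat.factorial 6 := by
  letI : Fintype (GaloisField 2 m) := Fintype.ofFinite _
  set F := GaloisField 2 m with hF
  have hq : Fintype.card F = 2 ^ m := by
    rw [← Nat.card_eq_fintype_card]
    exact GaloisField.card 2 m (by omega)
  have hset : designW m 6 = ↑(WD (∅ : Finset F)) := by
    ext B
    rw [Finset.mem_coe, mem_WD]
    constructor
    · intro h
      obtain ⟨h1, h2, h3⟩ := designW_iff.mp h
      exact ⟨h1, h2, h3, Finset.empty_subset B⟩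
    · intro h
      exact designW_iff.mpr ⟨h.1, h.2.1, h.2.2.1⟩
  constructor
  · intro x hx
    have hxset : {B ∈ designW m 6 | x ∈ B} = ↑(WD ({x} : Finset F)) := by
      ext B
      rw [Set.mem_setOf_eq, Finset.mem_coe, mem_WD, hset]
      rw [Finset.mem_coe, mem_WD]
      constructor
      · rintro ⟨⟨h1, h2, h3, -⟩, hxB⟩
        exact ⟨h1, h2, h3, Finset.singleton_subset_iff.mpr hxB⟩
      · rintro ⟨h1, h2, h3, hxB⟩
        exact ⟨⟨h1, h2, h3, Finset.empty_subset B⟩, Finset.singleton_subset_iff.mp hxB⟩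
    rw [hxset, Set.ncard_coe_finset]
    have hc := count_x (F := F) hx.1 hx.2
    rw [hq] at hc
    rw [show Nat.factorial 5 = 120 by norm_num [Nat.factorial]]
    rw [← hc, Nat.mul_div_cancel_left _ (by norm_num)]
  · rw [hset, Set.ncard_coe_finset]
    have hc := count_all (F := F)
    rw [hq] at hc
    rw [show Nat.factorial 6 = 720 by norm_num [Nat.factorial]]
    rw [← hc, Nat.mul_div_cancel_left _ (by norm_num)]

end
end

section
/- Suppose m ≥ 7. For every pair of distinct elements u, v ∈ X with u + v ≠ 1, the number of blocks B ∈ W_7 with u ∈ B and v ∈ B equals λ_7 = (2^m − 8)(2^m − 16)(2^m − 32)(2^m − 64)/5!; that is, the triple (X, W_2, W_7) is a group divisible design GDD(2^m − 2, 2, 7) with balance parameter λ_7 = (2^m − 8)(2^m − 16)(2^m − 32)(2^m − 64)/120. -/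
open scoped Classical
set_option linter.unusedSectionVars false

noncomputable section

open Finset

section Aux

variable {K : Type*} [Field K] [CharP K 2]

/-- subset sums of `s` -/
def spanS (s : Finset K) : Finset K := s.powerset.image fun I => I.sum id

/-- GF(2)-linear independence, combinatorially: no nonempty subset sums to zero -/
def Ind (s : Finset K) : Prop := ∀ I ⊆ s, I.sum id = 0 → I = ∅

lemma mem_spanS {s : Finset K} {x : K} : x ∈ spanS s ↔ ∃ I ⊆ s, I.sum id = x := by
  simp [spanS, Finset.mem_image, Finset.mem_powerset]

lemma mem_spanS_empty {x : K} : x ∈ spanS (∅ : Finset K) ↔ x = 0 := by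
  constructor
  · rw [mem_spanS]; rintro ⟨I, hI, rfl⟩
    rw [Finset.subset_empty.mp hI, Finset.sum_empty]
  · rintro rfl; rw [mem_spanS]; exact ⟨∅, Finset.Subset.refl _, Finset.sum_empty⟩

lemma add_self_zero (x : K) : x + x = 0 := CharTwo.add_self_eq_zero x

lemma add2_eq_zero_iff {x y : K} : x + y = 0 ↔ x = y := by
  constructor
  · intro h
    have := congrArg (· + y) h
    simpa [add_assoc, add_self_zero] using this
  · rintro rfl; exact add_self_zero x

lemma mem_spanS_insert {s : Finset K} {a x : K} (ha : a ∉ s) :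
    x ∈ spanS (insert a s) ↔ x ∈ spanS s ∨ x + a ∈ spanS s := by
  constructor
  · rw [mem_spanS]; rintro ⟨I, hIs, rfl⟩
    by_cases haI : a ∈ I
    · right; rw [mem_spanS]
      refine ⟨I.erase a, ?_, ?_⟩
      · intro y hy
        have := hIs (Finset.mem_of_mem_erase hy)
        rcases Finset.mem_insert.mp this with h | h
        · exact absurd h (Finset.ne_of_mem_erase hy)
        · exact h
      · have h1 : I.sum id = a + (I.erase a).sum id := by
          have := Finset.add_sum_erase I id haI
          simpa using this.symm
        rw [h1, add_comm a _, add_assoc, add_self_zero, add_zero]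
    · left; rw [mem_spanS]
      exact ⟨I, fun y hy => (Finset.mem_insert.mp (hIs hy)).resolve_left
        (fun h => haI (h ▸ hy)), rfl⟩
  · rintro (h | h) <;> rw [mem_spanS] at h ⊢
    · obtain ⟨I, hIs, rfl⟩ := h
      exact ⟨I, hIs.trans (Finset.subset_insert a s), rfl⟩
    · obtain ⟨I, hIs, hI⟩ := h
      have haI : a ∉ I := fun h => ha (hIs h)
      refine ⟨insert a I, Finset.insert_subset_insert a hIs, ?_⟩
      rw [Finset.sum_insert haI, hI]
      show a + (x + a) = x
      rw [add_comm x a, ← add_assoc, add_self_zero, zero_add]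

lemma subset_spanS {s : Finset K} : s ⊆ spanS s := by
  intro x hx
  rw [mem_spanS]
  exact ⟨{x}, Finset.singleton_subset_iff.mpr hx, Finset.sum_singleton _ _⟩

lemma sum_mem_spanS {s I : Finset K} (h : I ⊆ s) : I.sum id ∈ spanS s :=
  mem_spanS.mpr ⟨I, h, rfl⟩

lemma Ind.mono {s t : Finset K} (hs : Ind s) (hts : t ⊆ s) : Ind t :=
  fun I hI => hs I (hI.trans hts)

lemma sum_sdiff_eq {s I : Finset K} (h : I ⊆ s) :
    (s \ I).sum id = s.sum id + I.sum id := by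
  have := Finset.sum_sdiff (f := id) h
  rw [← this, add_assoc, add_self_zero, add_zero]

lemma Ind.sum_inj {s I J : Finset K} (hs : Ind s) (hI : I ⊆ s) (hJ : J ⊆ s)
    (h : I.sum id = J.sum id) : I = J := by
  have h1 : (I \ J).sum id = I.sum id + (I ∩ J).sum id := by
    rw [← Finset.sdiff_inter_self_left I J]
    exact sum_sdiff_eq Finset.inter_subset_left
  have h2 : (J \ I).sum id = J.sum id + (I ∩ J).sum id := by
    rw [← Finset.sdiff_inter_self_left J I, Finset.inter_comm J I]
    exact sum_sdiff_eq (Finset.inter_comm I J ▸ Finset.inter_subset_left)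
  have hD : ((I \ J) ∪ (J \ I)).sum id = 0 := by
    rw [Finset.sum_union (disjoint_sdiff_sdiff), h1, h2, h]
    exact add_self_zero _
  have hsub : (I \ J) ∪ (J \ I) ⊆ s :=
    Finset.union_subset ((Finset.sdiff_subset).trans hI) ((Finset.sdiff_subset).trans hJ)
  have := hs _ hsub hD
  rw [Finset.union_eq_empty] at this
  exact Finset.Subset.antisymm
    (fun x hx => by
      by_contra hxJ
      have hmem : x ∈ I \ J := Finset.mem_sdiff.mpr ⟨hx, hxJ⟩
      rw [this.1] at hmem
      exact absurd hmem (Finset.notMem_empty x))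
    (fun x hx => by
      by_contra hxI
      have hmem : x ∈ J \ I := Finset.mem_sdiff.mpr ⟨hx, hxI⟩
      rw [this.2] at hmem
      exact absurd hmem (Finset.notMem_empty x))

end Aux

section Aux2

variable {K : Type*} [Field K] [CharP K 2]

lemma Ind.insert' {s : Finset K} {x : K} (hs : Ind s) (hx : x ∉ spanS s) :
    Ind (insert x s) := by
  intro I hI hI0
  by_cases hxI : x ∈ I
  · exfalso
    apply hx
    rw [mem_spanS]
    refine ⟨I.erase x, ?_, ?_⟩
    · intro y hy
      have := hI (Finset.mem_of_mem_erase hy)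
      exact (Finset.mem_insert.mp this).resolve_left (Finset.ne_of_mem_erase hy)
    · have h1 : I.sum id = x + (I.erase x).sum id := by
        have := Finset.add_sum_erase I id hxI
        simpa using this.symm
      rw [h1] at hI0
      exact (add2_eq_zero_iff.mp hI0).symm
  · exact hs I (fun y hy => (Finset.mem_insert.mp (hI hy)).resolve_left
      (fun h => hxI (h ▸ hy))) hI0

lemma not_mem_spanS_of {s t : Finset K} {x : K} (hs : Ind s) (hts : t ⊆ s)
    (hxs : x ∈ s) (hxt : x ∉ t) : x ∉ spanS t := by
  intro h
  rw [mem_spanS] at h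
  obtain ⟨I, hIt, hI⟩ := h
  have hxI : x ∉ I := fun h => hxt (hIt h)
  have hsub : insert x I ⊆ s := Finset.insert_subset hxs (hIt.trans hts)
  have hsum : (insert x I).sum id = 0 := by
    rw [Finset.sum_insert hxI]
    show x + I.sum id = 0
    rw [hI]
    exact add_self_zero x
  have := hs _ hsub hsum
  exact absurd (this ▸ Finset.mem_insert_self x I) (Finset.notMem_empty x)

lemma not_mem_of_mem_spanS {s : Finset K} {x : K} (hx : x ∉ spanS s) : x ∉ s :=
  fun h => hx (subset_spanS h)

lemma card_spanS {s : Finset K} (hs : Ind s) : (spanS s).card = 2 ^ s.card := by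
  rw [spanS, Finset.card_image_of_injOn, Finset.card_powerset]
  intro I hI J hJ h
  exact hs.sum_inj (Finset.mem_powerset.mp (by exact_mod_cast hI))
    (Finset.mem_powerset.mp (by exact_mod_cast hJ)) h

/-- one step of the tuple chain -/
def stepSet {k : ℕ} (A : Finset (Fin k → K)) (C : (Fin k → K) → Finset K) :
    Finset (Fin (k + 1) → K) :=
  A.biUnion fun f => (C f).image (Fin.snoc f)

lemma mem_stepSet {k : ℕ} {A : Finset (Fin k → K)} {C : (Fin k → K) → Finset K}
    {g : Fin (k + 1) → K} :
    g ∈ stepSet A C ↔ Fin.init g ∈ A ∧ g (Fin.last k) ∈ C (Fin.init g) := by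
  simp only [stepSet, Finset.mem_biUnion, Finset.mem_image]
  constructor
  · rintro ⟨f, hf, b, hb, rfl⟩
    simpa [Fin.init_snoc, Fin.snoc_last] using ⟨hf, hb⟩
  · rintro ⟨hf, hb⟩
    exact ⟨_, hf, _, hb, Fin.snoc_init_self g⟩

lemma card_stepSet {k : ℕ} {A : Finset (Fin k → K)} {C : (Fin k → K) → Finset K}
    {n : ℕ} (h : ∀ f ∈ A, (C f).card = n) : (stepSet A C).card = A.card * n := by
  rw [stepSet, Finset.card_biUnion]
  · rw [Finset.sum_congr rfl (fun f hf => ?_), Finset.sum_const, smul_eq_mul]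
    rw [Finset.card_image_of_injective _ (fun b c hbc => by
      have := congrArg (fun g => g (Fin.last k)) hbc
      simpa [Fin.snoc_last] using this), h f hf]
  · intro f hf g hg hfg
    rw [Function.onFun, Finset.disjoint_left]
    rintro x hx hx'
    simp only [Finset.mem_image] at hx hx'
    obtain ⟨b, _, rfl⟩ := hx
    obtain ⟨c, _, hc⟩ := hx'
    apply hfg
    have := congrArg Fin.init hc
    rw [Fin.init_snoc, Fin.init_snoc] at this
    exact this.symm

end Aux2

section Chain

variable {K : Type*} [Field K] [Fintype K] [CharP K 2]

variable (u v : K)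

/-- base set `{1, u, v}` -/
def s0 : Finset K := {1, u, v}

/-- the set `{1,u,v} ∪ range f` -/
def Sset {k : ℕ} (f : Fin k → K) : Finset K := s0 u v ∪ Finset.image f Finset.univ

/-- chain of tuple sets -/
def Tchain : (k : ℕ) → Finset (Fin k → K)
  | 0 => {fun i => i.elim0}
  | (k + 1) => stepSet (Tchain k) fun f => (spanS (Sset u v f))ᶜ

variable {u v}
variable (hu0 : u ≠ 0) (hu1 : u ≠ 1) (hv0 : v ≠ 0) (hv1 : v ≠ 1)
  (huv : u ≠ v) (hsum : u + v ≠ 1)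

section WithHyps
include hu0 hu1 hv0 hv1 huv hsum

lemma card_s0 : (s0 u v).card = 3 := by
  rw [s0, Finset.card_insert_of_notMem, Finset.card_insert_of_notMem,
    Finset.card_singleton]
  · simpa using huv
  · simp only [Finset.mem_insert, Finset.mem_singleton]
    push_neg
    exact ⟨fun h => hu1 h.symm, fun h => hv1 h.symm⟩

lemma ind_s0 : Ind (s0 u v) := by
  have h0 : Ind (∅ : Finset K) := fun I hI _ => Finset.subset_empty.mp hI
  have hv' : Ind ({v} : Finset K) := by
    have : ({v} : Finset K) = insert v ∅ := rfl
    rw [this]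
    exact h0.insert' (by rw [mem_spanS_empty]; exact hv0)
  have huv' : Ind ({u, v} : Finset K) := by
    apply hv'.insert'
    have : ({v} : Finset K) = insert v ∅ := rfl
    rw [this, mem_spanS_insert (Finset.notMem_empty v)]
    push_neg
    rw [mem_spanS_empty, mem_spanS_empty]
    exact ⟨hu0, fun h => huv (add2_eq_zero_iff.mp h)⟩
  apply huv'.insert'
  have h1 : v ∉ ({} : Finset K) := Finset.notMem_empty v
  have h2 : u ∉ ({v} : Finset K) := by simpa using huv
  have hve : ({v} : Finset K) = insert v ∅ := rfl
  rw [mem_spanS_insert h2, hve, mem_spanS_insert h1, mem_spanS_insert h1]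
  push_neg
  simp only [mem_spanS_empty]
  refine ⟨⟨one_ne_zero, ?_⟩, ?_, ?_⟩
  · intro h; exact hv1 (add2_eq_zero_iff.mp h).symm
  · intro h; exact hu1 (add2_eq_zero_iff.mp h).symm
  · intro h
    apply hsum
    have : 1 + (u + v) = 0 := by rw [← h]; ring
    exact (add2_eq_zero_iff.mp this).symm

end WithHyps

lemma Sset_eq_inserts {k : ℕ} (f : Fin k → K) :
    Sset u v f = insert 1 (insert u (insert v (Finset.image f Finset.univ))) := by
  ext x
  simp only [Sset, s0, Finset.mem_union, Finset.mem_insert, Finset.mem_singleton,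
    Finset.mem_image]
  tauto

lemma image_snoc {k : ℕ} (f : Fin k → K) (b : K) :
    Finset.image (Fin.snoc f b) Finset.univ = insert b (Finset.image f Finset.univ) := by
  rw [Fin.univ_castSuccEmb, Finset.cons_eq_insert, Finset.image_insert, Fin.snoc_last]
  congr 1
  ext x
  simp only [Finset.mem_image, Finset.mem_map, Function.comp_apply, Fin.coe_castSuccEmb]
  constructor
  · rintro ⟨y, ⟨i, _, rfl⟩, rfl⟩
    exact ⟨i, Finset.mem_univ i, by simp⟩
  · rintro ⟨i, _, rfl⟩
    exact ⟨Fin.castSucc i, ⟨i, Finset.mem_univ i, rfl⟩, by simp [Fin.snoc_castSucc]⟩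

lemma Sset_snoc {k : ℕ} (f : Fin k → K) (b : K) :
    Sset u v (Fin.snoc f b) = insert b (Sset u v f) := by
  rw [Sset, Sset, image_snoc, Finset.union_insert]

lemma Sset_init_snoc {k : ℕ} (g : Fin (k + 1) → K) :
    Sset u v g = insert (g (Fin.last k)) (Sset u v (Fin.init g)) := by
  conv_lhs => rw [← Fin.snoc_init_self g]
  rw [Sset_snoc]

end Chain

section Chain2

variable {K : Type*} [Field K] [Fintype K] [CharP K 2]
variable {u v : K}
variable (hu0 : u ≠ 0) (hu1 : u ≠ 1) (hv0 : v ≠ 0) (hv1 : v ≠ 1)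
  (huv : u ≠ v) (hsum : u + v ≠ 1)

include hu0 hu1 hv0 hv1 huv hsum

lemma Sset_zero (f : Fin 0 → K) : Sset u v f = s0 u v := by
  rw [Sset]
  simp

lemma Tchain_inv : ∀ k, ∀ f ∈ Tchain u v k, Ind (Sset u v f) ∧ (Sset u v f).card = 3 + k := by
  intro k
  induction k with
  | zero =>
    intro f _
    rw [Sset_zero hu0 hu1 hv0 hv1 huv hsum]
    exact ⟨ind_s0 hu0 hu1 hv0 hv1 huv hsum, card_s0 hu0 hu1 hv0 hv1 huv hsum⟩
  | succ k ih =>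
    intro f hf
    rw [Tchain, mem_stepSet] at hf
    obtain ⟨hf1, hf2⟩ := hf
    rw [Finset.mem_compl] at hf2
    obtain ⟨hInd, hcard⟩ := ih _ hf1
    have hb : f (Fin.last k) ∉ Sset u v (Fin.init f) :=
      fun h => hf2 (subset_spanS h)
    rw [Sset_init_snoc f]
    exact ⟨hInd.insert' hf2, by rw [Finset.card_insert_of_notMem hb, hcard]; omega⟩

lemma mem_Tchain_of : ∀ k, ∀ f : Fin k → K, Ind (Sset u v f) → (Sset u v f).card = 3 + k →
    f ∈ Tchain u v k := by
  intro k
  induction k with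
  | zero =>
    intro f _ _
    rw [Tchain, Finset.mem_singleton]
    funext i
    exact i.elim0
  | succ k ih =>
    intro f hInd hcard
    rw [Tchain, mem_stepSet]
    set b := f (Fin.last k) with hbdef
    have hins : Sset u v f = insert b (Sset u v (Fin.init f)) := Sset_init_snoc f
    have hsub : Sset u v (Fin.init f) ⊆ Sset u v f := hins ▸ Finset.subset_insert _ _
    have hInd' : Ind (Sset u v (Fin.init f)) := hInd.mono hsub
    have hcard_le : (Sset u v (Fin.init f)).card ≤ 3 + k := by
      calc (Sset u v (Fin.init f)).card
          ≤ (s0 u v).card + (Finset.image (Fin.init f) Finset.univ).card :=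
            Finset.card_union_le _ _
        _ ≤ 3 + k := by
            rw [card_s0 hu0 hu1 hv0 hv1 huv hsum]
            have := Finset.card_image_le (f := Fin.init f) (s := Finset.univ)
            simp only [Finset.card_univ, Fintype.card_fin] at this
            omega
    have hb : b ∉ Sset u v (Fin.init f) := by
      intro h
      rw [hins, Finset.insert_eq_self.mpr h] at hcard
      omega
    have hcard' : (Sset u v (Fin.init f)).card = 3 + k := by
      rw [hins, Finset.card_insert_of_notMem hb] at hcard
      omega
    refine ⟨ih _ hInd' hcard', ?_⟩
    rw [Finset.mem_compl]
    exact not_mem_spanS_of hInd hsub (hins ▸ Finset.mem_insert_self b _) hb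

lemma card_Tchain : ∀ k, (Tchain u v k).card =
    ∏ i ∈ Finset.range k, (Fintype.card K - 2 ^ (3 + i)) := by
  intro k
  induction k with
  | zero => simp [Tchain]
  | succ k ih =>
    rw [Tchain, Finset.prod_range_succ, ← ih]
    apply card_stepSet
    intro f hf
    obtain ⟨hInd, hcard⟩ := Tchain_inv hu0 hu1 hv0 hv1 huv hsum k f hf
    rw [Finset.card_compl, card_spanS hInd, hcard]

end Chain2

section Blocks

variable {K : Type*} [Field K] [Fintype K] [CharP K 2]

variable (u v : K)

/-- the tuple set of all "ordered blocks" -/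
def TT : Finset (Fin 5 → K) :=
  (Tchain u v 4).image fun f => Fin.snoc f ((Sset u v f).sum id)

def IsBlock (B : Finset K) : Prop :=
  u ∈ B ∧ v ∈ B ∧ B.card = 7 ∧ B.sum id = 1 ∧ Ind B

def Blocks : Finset (Finset K) := Finset.univ.filter (IsBlock u v)

def blockOf (g : Fin 5 → K) : Finset K :=
  insert u (insert v (Finset.image g Finset.univ))

variable {u v}
variable (hu0 : u ≠ 0) (hu1 : u ≠ 1) (hv0 : v ≠ 0) (hv1 : v ≠ 1)
  (huv : u ≠ v) (hsum : u + v ≠ 1)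

include hu0 hu1 hv0 hv1 huv hsum

lemma tchain4_main (f : Fin 4 → K) (hf : f ∈ Tchain u v 4) :
    IsBlock u v (blockOf u v (Fin.snoc f ((Sset u v f).sum id))) ∧
    Finset.image (Fin.snoc f ((Sset u v f).sum id)) Finset.univ =
      blockOf u v (Fin.snoc f ((Sset u v f).sum id)) \ {u, v} := by
  obtain ⟨hInd, hcard⟩ := Tchain_inv hu0 hu1 hv0 hv1 huv hsum 4 f hf
  have hSi : Sset u v f = insert 1 (insert u (insert v (Finset.image f Finset.univ))) :=
    Sset_eq_inserts f
  set S := Sset u v f with hSdef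
  set b := S.sum id with hbdef
  have h1S : (1 : K) ∈ S := by rw [hSi]; exact Finset.mem_insert_self 1 _
  have huS : u ∈ S := by rw [hSi]; simp
  have hvS : v ∈ S := by rw [hSi]; simp
  have hfS : ∀ i, f i ∈ S := by
    intro i; rw [hSi]
    simp only [Finset.mem_insert, Finset.mem_image]
    exact Or.inr (Or.inr (Or.inr ⟨i, Finset.mem_univ i, rfl⟩))
  -- disjointness of s0 and image f, and injectivity of f
  have hcard3 : (s0 u v).card = 3 := card_s0 hu0 hu1 hv0 hv1 huv hsum
  have himg_le : (Finset.image f Finset.univ).card ≤ 4 := by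
    have := Finset.card_image_le (f := f) (s := Finset.univ)
    simpa using this
  have hU : s0 u v ∪ Finset.image f Finset.univ = S := rfl
  have hkey := Finset.card_union_add_card_inter (s0 u v) (Finset.image f Finset.univ)
  rw [hU, hcard, hcard3] at hkey
  have hinter : ((s0 u v) ∩ Finset.image f Finset.univ).card = 0 := by omega
  have himg4 : (Finset.image f Finset.univ).card = 4 := by omega
  have hdisj : ∀ x ∈ s0 u v, x ∉ Finset.image f Finset.univ := by
    intro x hx hx'
    have : x ∈ (s0 u v) ∩ Finset.image f Finset.univ := Finset.mem_inter.mpr ⟨hx, hx'⟩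
    rw [Finset.card_eq_zero.mp hinter] at this
    exact absurd this (Finset.notMem_empty x)
  have h1img : (1 : K) ∉ Finset.image f Finset.univ := hdisj 1 (by rw [s0]; simp)
  have huimg : u ∉ Finset.image f Finset.univ := hdisj u (by rw [s0]; simp)
  have hvimg : v ∉ Finset.image f Finset.univ := hdisj v (by rw [s0]; simp)
  -- b ∉ S
  have hbS : b ∉ S := by
    intro hb
    have hsd : (S \ {b}).sum id = 0 := by
      rw [sum_sdiff_eq (Finset.singleton_subset_iff.mpr hb)]
      rw [Finset.sum_singleton]
      exact add_self_zero b
    have := hInd _ Finset.sdiff_subset hsd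
    have hcs : (S \ {b}).card = 6 := by
      rw [Finset.card_sdiff_of_subset (Finset.singleton_subset_iff.mpr hb), hcard,
        Finset.card_singleton]
    rw [this] at hcs
    simp at hcs
  have hb1 : b ≠ 1 := fun h => hbS (h ▸ h1S)
  have hbu : b ≠ u := fun h => hbS (h ▸ huS)
  have hbv : b ≠ v := fun h => hbS (h ▸ hvS)
  have hbimg : b ∉ Finset.image f Finset.univ := by
    intro h
    rw [Finset.mem_image] at h
    obtain ⟨i, _, hi⟩ := h
    exact hbS (hi ▸ hfS i)
  set g : Fin 5 → K := Fin.snoc f b with hgdef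
  have himg_g : Finset.image g Finset.univ = insert b (Finset.image f Finset.univ) :=
    image_snoc f b
  -- key set identity
  have hE : insert 1 (blockOf u v g) = insert b S := by
    rw [hSi]
    show insert 1 (insert u (insert v (Finset.image g Finset.univ))) = _
    rw [himg_g, Finset.insert_comm v b, Finset.insert_comm u b, Finset.insert_comm 1 b]
  have h1B : (1 : K) ∉ blockOf u v g := by
    simp only [blockOf, himg_g, Finset.mem_insert]
    push_neg
    refine ⟨fun h => hu1 h.symm, fun h => hv1 h.symm, fun h => hb1 h.symm, h1img⟩
  have huB : u ∈ blockOf u v g := Finset.mem_insert_self u _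
  have hvB : v ∈ blockOf u v g := Finset.mem_insert.mpr (Or.inr (Finset.mem_insert_self v _))
  -- cardinality
  have hcardB : (blockOf u v g).card = 7 := by
    have h1 : (insert 1 (blockOf u v g)).card = (blockOf u v g).card + 1 :=
      Finset.card_insert_of_notMem h1B
    have h2 : (insert b S).card = 8 := by
      rw [Finset.card_insert_of_notMem hbS, hcard]
    rw [hE, h2] at h1
    omega
  -- sum
  have hsumB : (blockOf u v g).sum id = 1 := by
    have h1 : (insert 1 (blockOf u v g)).sum id = 1 + (blockOf u v g).sum id := by
      rw [Finset.sum_insert h1B]; rfl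
    have h2 : (insert b S).sum id = 0 := by
      rw [Finset.sum_insert hbS]
      show b + S.sum id = 0
      rw [← hbdef]
      exact add_self_zero b
    rw [hE, h2] at h1
    exact (add2_eq_zero_iff.mp h1.symm).symm
  -- independence
  have hIndB : Ind (blockOf u v g) := by
    intro I hI hI0
    have hIbS : I ⊆ insert b S := by
      intro x hx
      rw [← hE]
      exact Finset.mem_insert_of_mem (hI hx)
    by_cases hbI : b ∈ I
    · exfalso
      have hJ : I.erase b ⊆ S := by
        intro y hy
        exact (Finset.mem_insert.mp (hIbS (Finset.mem_of_mem_erase hy))).resolve_left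
          (Finset.ne_of_mem_erase hy)
      have hsJ : (I.erase b).sum id = b := by
        have h1 : I.sum id = b + (I.erase b).sum id := by
          have := Finset.add_sum_erase I id hbI
          simpa using this.symm
        rw [hI0] at h1
        exact (add2_eq_zero_iff.mp h1.symm).symm
      have : I.erase b = S := hInd.sum_inj hJ (Finset.Subset.refl S) (hsJ.trans hbdef)
      have h1I : (1 : K) ∈ I := Finset.mem_of_mem_erase (this ▸ h1S)
      exact h1B (hI h1I)
    · exact hInd I (fun x hx =>
        (Finset.mem_insert.mp (hIbS hx)).resolve_left (fun h => hbI (h ▸ hx))) hI0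
  refine ⟨⟨huB, hvB, hcardB, hsumB, hIndB⟩, ?_⟩
  -- image g = blockOf \ {u, v}
  ext x
  rw [Finset.mem_sdiff]
  constructor
  · intro hx
    have hxu : x ≠ u := by
      rintro rfl
      rcases Finset.mem_insert.mp (himg_g ▸ hx) with h | h
      · exact hbu h.symm
      · exact huimg h
    have hxv : x ≠ v := by
      rintro rfl
      rcases Finset.mem_insert.mp (himg_g ▸ hx) with h | h
      · exact hbv h.symm
      · exact hvimg h
    refine ⟨Finset.mem_insert_of_mem (Finset.mem_insert_of_mem hx), ?_⟩
    simp only [Finset.mem_insert, Finset.mem_singleton]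
    push_neg
    exact ⟨hxu, hxv⟩
  · rintro ⟨hx1, hx2⟩
    simp only [Finset.mem_insert, Finset.mem_singleton] at hx2
    rcases Finset.mem_insert.mp hx1 with rfl | hx1
    · exact absurd (Or.inl rfl) hx2
    rcases Finset.mem_insert.mp hx1 with rfl | hx1
    · exact absurd (Or.inr rfl) hx2
    · exact hx1

end Blocks

section Blocks2

variable {K : Type*} [Field K] [Fintype K] [CharP K 2]
variable {u v : K}
variable (hu0 : u ≠ 0) (hu1 : u ≠ 1) (hv0 : v ≠ 0) (hv1 : v ≠ 1)
  (huv : u ≠ v) (hsum : u + v ≠ 1)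

include hu0 hu1 hv0 hv1 huv hsum

lemma mem_TT_of (B : Finset K) (hB : IsBlock u v B) (g : Fin 5 → K)
    (hg : Finset.image g Finset.univ = B \ {u, v}) :
    g ∈ TT u v ∧ blockOf u v g = B := by
  obtain ⟨huB, hvB, hcardB, hsumB, hIndB⟩ := hB
  have huvB : ({u, v} : Finset K) ⊆ B :=
    Finset.insert_subset huB (Finset.singleton_subset_iff.mpr hvB)
  have hcard_uv : ({u, v} : Finset K).card = 2 := by
    rw [Finset.card_insert_of_notMem (by simpa using huv), Finset.card_singleton]
  have hcard_s : (B \ {u, v}).card = 5 := by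
    rw [Finset.card_sdiff_of_subset huvB, hcardB, hcard_uv]
  have himg5 : (Finset.image g Finset.univ).card = 5 := by rw [hg, hcard_s]
  have hginj : Function.Injective g := by
    have hinj : Set.InjOn g ↑(Finset.univ : Finset (Fin 5)) :=
      Finset.injOn_of_card_image_eq (by rw [himg5]; simp)
    intro a b hab
    exact hinj (by simp) (by simp) hab
  have h1B : (1 : K) ∉ B := by
    intro h1
    have hsd : (B \ {1}).sum id = 0 := by
      rw [sum_sdiff_eq (Finset.singleton_subset_iff.mpr h1), hsumB, Finset.sum_singleton]
      exact add_self_zero 1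
    have hemp := hIndB _ Finset.sdiff_subset hsd
    have hcs : (B \ {1}).card = 6 := by
      rw [Finset.card_sdiff_of_subset (Finset.singleton_subset_iff.mpr h1), hcardB,
        Finset.card_singleton]
    rw [hemp] at hcs
    simp at hcs
  have hgB : ∀ i, g i ∈ B ∧ g i ≠ u ∧ g i ≠ v := by
    intro i
    have : g i ∈ B \ {u, v} := hg ▸ Finset.mem_image_of_mem g (Finset.mem_univ i)
    rw [Finset.mem_sdiff] at this
    refine ⟨this.1, ?_, ?_⟩
    · intro h; exact this.2 (by simp [h])
    · intro h; exact this.2 (by simp [h])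
  set f : Fin 4 → K := Fin.init g with hfdef
  set b : K := g (Fin.last 4) with hbdef
  have himgg : Finset.image g Finset.univ = insert b (Finset.image f Finset.univ) := by
    have := image_snoc f b
    rw [hfdef, hbdef, Fin.snoc_init_self g] at this
    exact this
  have hfB : ∀ i, f i ∈ B ∧ f i ≠ u ∧ f i ≠ v := fun i => hgB i.castSucc
  have hbB : b ∈ B := (hgB (Fin.last 4)).1
  have hbu : b ≠ u := (hgB (Fin.last 4)).2.1
  have hbv : b ≠ v := (hgB (Fin.last 4)).2.2
  have hb1 : b ≠ 1 := fun h => h1B (h ▸ hbB)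
  have hbf : b ∉ Finset.image f Finset.univ := by
    intro h
    rw [Finset.mem_image] at h
    obtain ⟨i, _, hi⟩ := h
    exact absurd (hginj hi) (Fin.castSucc_lt_last i).ne
  have hSi : Sset u v f = insert 1 (insert u (insert v (Finset.image f Finset.univ))) :=
    Sset_eq_inserts f
  have hBi : B = insert u (insert v (Finset.image g Finset.univ)) := by
    rw [hg]
    ext x
    simp only [Finset.mem_insert, Finset.mem_sdiff, Finset.mem_singleton]
    constructor
    · intro hx
      by_cases hxu : x = u
      · exact Or.inl hxu
      by_cases hxv : x = v
      · exact Or.inr (Or.inl hxv)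
      · exact Or.inr (Or.inr ⟨hx, by push_neg; exact ⟨hxu, hxv⟩⟩)
    · rintro (rfl | rfl | ⟨hx, _⟩)
      · exact huB
      · exact hvB
      · exact hx
  have hE' : insert b (Sset u v f) = insert 1 B := by
    rw [hSi, hBi, himgg, Finset.insert_comm b 1, Finset.insert_comm b u,
      Finset.insert_comm b v]
  have hsubB : ∀ x ∈ insert u (insert v (Finset.image f Finset.univ)), x ∈ B := by
    intro x hx
    rcases Finset.mem_insert.mp hx with rfl | hx
    · exact huB
    rcases Finset.mem_insert.mp hx with rfl | hx
    · exact hvB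
    · rw [Finset.mem_image] at hx
      obtain ⟨i, _, rfl⟩ := hx
      exact (hfB i).1
  have hb_not_S : b ∉ Sset u v f := by
    rw [hSi]
    simp only [Finset.mem_insert]
    push_neg
    exact ⟨hb1, hbu, hbv, hbf⟩
  have hcardS : (Sset u v f).card = 7 := by
    have h1 : (insert b (Sset u v f)).card = (Sset u v f).card + 1 :=
      Finset.card_insert_of_notMem hb_not_S
    have h2 : (insert 1 B).card = 8 := by
      rw [Finset.card_insert_of_notMem h1B, hcardB]
    rw [hE', h2] at h1
    omega
  have hIndS : Ind (Sset u v f) := by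
    intro I hI hI0
    by_cases h1I : (1 : K) ∈ I
    · exfalso
      have hJ : I.erase 1 ⊆ B := by
        intro y hy
        apply hsubB
        have hyS := hI (Finset.mem_of_mem_erase hy)
        rw [hSi] at hyS
        exact (Finset.mem_insert.mp hyS).resolve_left (Finset.ne_of_mem_erase hy)
      have hsJ : (I.erase 1).sum id = 1 := by
        have h1 : I.sum id = 1 + (I.erase 1).sum id := by
          have := Finset.add_sum_erase I id h1I
          simpa using this.symm
        rw [hI0] at h1
        exact (add2_eq_zero_iff.mp h1.symm).symm
      have hC : (B \ I.erase 1).sum id = 0 := by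
        rw [sum_sdiff_eq hJ, hsumB, hsJ]
        exact add_self_zero 1
      have hemp := hIndB _ Finset.sdiff_subset hC
      have hbJ : b ∈ I.erase 1 := by
        have : B ⊆ I.erase 1 := Finset.sdiff_eq_empty_iff_subset.mp hemp
        exact this hbB
      exact hb_not_S (hI (Finset.mem_of_mem_erase hbJ))
    · apply hIndB I ?_ hI0
      intro x hx
      apply hsubB
      have hxS := hI hx
      rw [hSi] at hxS
      exact (Finset.mem_insert.mp hxS).resolve_left (fun h => h1I (h ▸ hx))
  have hb_eq : b = (Sset u v f).sum id := by
    have h1 : (insert b (Sset u v f)).sum id = b + (Sset u v f).sum id := by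
      rw [Finset.sum_insert hb_not_S]; rfl
    have h2 : (insert 1 B).sum id = 0 := by
      rw [Finset.sum_insert h1B, hsumB]
      exact add_self_zero 1
    rw [hE', h2] at h1
    exact add2_eq_zero_iff.mp h1.symm
  have hfT : f ∈ Tchain u v 4 :=
    mem_Tchain_of hu0 hu1 hv0 hv1 huv hsum 4 f hIndS (by rw [hcardS])
  have hgTT : g ∈ TT u v := by
    rw [TT, Finset.mem_image]
    refine ⟨f, hfT, ?_⟩
    rw [← hb_eq]
    exact Fin.snoc_init_self g
  exact ⟨hgTT, by rw [blockOf, ← hBi]⟩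

end Blocks2

section Count

variable {K : Type*} [Field K] [Fintype K] [CharP K 2]
variable {u v : K}
variable (hu0 : u ≠ 0) (hu1 : u ≠ 1) (hv0 : v ≠ 0) (hv1 : v ≠ 1)
  (huv : u ≠ v) (hsum : u + v ≠ 1)

include hu0 hu1 hv0 hv1 huv hsum

lemma TT_card : (TT u v).card = ∏ i ∈ Finset.range 4, (Fintype.card K - 2 ^ (3 + i)) := by
  rw [TT, Finset.card_image_of_injOn, card_Tchain hu0 hu1 hv0 hv1 huv hsum]
  intro f1 h1 f2 h2 h
  have := congrArg Fin.init h
  rwa [Fin.init_snoc, Fin.init_snoc] at this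

lemma fiber_eq (B : Finset K) (hB : B ∈ Blocks u v) :
    (TT u v).filter (fun g => blockOf u v g = B) =
      Finset.univ.filter (fun g : Fin 5 → K => Finset.image g Finset.univ = B \ {u, v}) := by
  ext g
  simp only [Finset.mem_filter, Finset.mem_univ, true_and]
  constructor
  · rintro ⟨hgTT, rfl⟩
    obtain ⟨f, hf, rfl⟩ := Finset.mem_image.mp hgTT
    exact (tchain4_main hu0 hu1 hv0 hv1 huv hsum f hf).2
  · intro hg
    have hBisb : IsBlock u v B := (Finset.mem_filter.mp hB).2
    exact mem_TT_of hu0 hu1 hv0 hv1 huv hsum B hBisb g hg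

omit hu0 hu1 hv0 hv1 hsum in
lemma fiber_card (B : Finset K) (hB : IsBlock u v B) :
    (Finset.univ.filter
      (fun g : Fin 5 → K => Finset.image g Finset.univ = B \ {u, v})).card = 120 := by
  obtain ⟨huB, hvB, hcardB, _, _⟩ := hB
  have huvB : ({u, v} : Finset K) ⊆ B :=
    Finset.insert_subset huB (Finset.singleton_subset_iff.mpr hvB)
  have hcard_uv : ({u, v} : Finset K).card = 2 := by
    rw [Finset.card_insert_of_notMem (by simpa using huv), Finset.card_singleton]
  set s : Finset K := B \ {u, v} with hsdef
  have hs5 : s.card = 5 := by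
    rw [hsdef, Finset.card_sdiff_of_subset huvB, hcardB, hcard_uv]
  have hcoe5 : Fintype.card ↥s = 5 := by
    rw [Fintype.card_coe, hs5]
  have e : Fin 5 ≃ ↥s := (s.equivFin.trans (finCongr hs5)).symm
  have hcardE : (Finset.univ : Finset (Fin 5 ≃ ↥s)).card = 120 := by
    rw [Finset.card_univ, Fintype.card_equiv e]
    simp [Nat.factorial]
  rw [← hcardE]
  symm
  apply Finset.card_bij (fun (σ : Fin 5 ≃ ↥s) _ => (fun i => (σ i : K)))
  · intro σ _
    rw [Finset.mem_filter]
    refine ⟨Finset.mem_univ _, ?_⟩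
    ext x
    rw [Finset.mem_image]
    constructor
    · rintro ⟨i, _, rfl⟩
      exact (σ i).2
    · intro hx
      exact ⟨σ.symm ⟨x, hx⟩, Finset.mem_univ _, by simp⟩
  · intro σ₁ _ σ₂ _ h
    ext i
    have := congrFun h i
    exact congrArg Subtype.val (Subtype.ext this : σ₁ i = σ₂ i) ▸ rfl
  · intro g hg
    rw [Finset.mem_filter] at hg
    have himg : Finset.image g Finset.univ = s := hg.2
    have hinj : Function.Injective g := by
      have h5 : (Finset.image g Finset.univ).card = 5 := by rw [himg, hs5]
      have hinj' : Set.InjOn g ↑(Finset.univ : Finset (Fin 5)) :=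
        Finset.injOn_of_card_image_eq (by rw [h5]; simp)
      intro a b hab
      exact hinj' (by simp) (by simp) hab
    have hmem : ∀ i, g i ∈ s := fun i =>
      himg ▸ Finset.mem_image_of_mem g (Finset.mem_univ i)
    set φ : Fin 5 → ↥s := fun i => ⟨g i, hmem i⟩ with hφ
    have hφinj : Function.Injective φ := by
      intro a b hab
      exact hinj (congrArg Subtype.val hab)
    have hφbij : Function.Bijective φ :=
      (Fintype.bijective_iff_injective_and_card φ).mpr ⟨hφinj, by rw [hcoe5]; simp⟩
    exact ⟨Equiv.ofBijective φ hφbij, Finset.mem_univ _, rfl⟩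

lemma blocks_card_mul :
    (Blocks u v).card * 120 = ∏ i ∈ Finset.range 4, (Fintype.card K - 2 ^ (3 + i)) := by
  have h1 : (TT u v).card =
      ∑ B ∈ Blocks u v, ((TT u v).filter (fun g => blockOf u v g = B)).card := by
    apply Finset.card_eq_sum_card_fiberwise
    intro g hg
    obtain ⟨f, hf, rfl⟩ := Finset.mem_image.mp hg
    rw [Blocks, Finset.mem_coe, Finset.mem_filter]
    exact ⟨Finset.mem_univ _, (tchain4_main hu0 hu1 hv0 hv1 huv hsum f hf).1⟩
  have h2 : ∀ B ∈ Blocks u v,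
      ((TT u v).filter (fun g => blockOf u v g = B)).card = 120 := by
    intro B hB
    rw [fiber_eq hu0 hu1 hv0 hv1 huv hsum B hB]
    exact fiber_card huv B (Finset.mem_filter.mp hB).2
  rw [Finset.sum_congr rfl h2, Finset.sum_const, smul_eq_mul] at h1
  rw [← h1, TT_card hu0 hu1 hv0 hv1 huv hsum]

end Count

section Equivalence

variable {K : Type*} [Field K] [CharP K 2]

lemma isBlock_iff' (B : Finset K) :
    ((↑B : Set K) ⊆ {x : K | x ≠ 0 ∧ x ≠ 1} ∧ B.card = 7 ∧ B.sum id = 1 ∧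
      ∀ I ⊆ B, I.Nonempty → I ≠ B → I.sum id ≠ 1) ↔
    (B.card = 7 ∧ B.sum id = 1 ∧ Ind B) := by
  constructor
  · rintro ⟨_, hcard, hsum1, hmin⟩
    refine ⟨hcard, hsum1, ?_⟩
    intro I hI hI0
    by_contra hne
    have hInonempty : I.Nonempty := Finset.nonempty_iff_ne_empty.mpr hne
    by_cases hIB : I = B
    · rw [hIB, hsum1] at hI0
      exact one_ne_zero hI0
    · have hJsum : (B \ I).sum id = 1 := by
        rw [sum_sdiff_eq hI, hsum1, hI0, add_zero]
      have hJne : B \ I ≠ B := by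
        obtain ⟨x, hx⟩ := hInonempty
        intro h
        have : x ∈ B \ I := by rw [h]; exact hI hx
        exact (Finset.mem_sdiff.mp this).2 hx
      have hJnonempty : (B \ I).Nonempty := by
        rw [Finset.sdiff_nonempty]
        intro h
        exact hIB (Finset.Subset.antisymm hI h)
      exact hmin _ Finset.sdiff_subset hJnonempty hJne hJsum
  · rintro ⟨hcard, hsum1, hInd⟩
    refine ⟨?_, hcard, hsum1, ?_⟩
    · intro x hx
      rw [Finset.mem_coe] at hx
      constructor
      · intro h0
        have : ({x} : Finset K).sum id = 0 := by rw [Finset.sum_singleton]; exact h0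
        have := hInd {x} (Finset.singleton_subset_iff.mpr hx) this
        simp at this
      · intro h1
        have hsd : (B \ {x}).sum id = 0 := by
          rw [sum_sdiff_eq (Finset.singleton_subset_iff.mpr hx), hsum1,
            Finset.sum_singleton, h1]
          exact add_self_zero 1
        have hemp := hInd _ Finset.sdiff_subset hsd
        have : (B \ {x}).card = 6 := by
          rw [Finset.card_sdiff_of_subset (Finset.singleton_subset_iff.mpr hx), hcard,
            Finset.card_singleton]
        rw [hemp] at this
        simp at this
    · intro I hI hInonempty hne hIs
      have hJ : (B \ I).sum id = 0 := by
        rw [sum_sdiff_eq hI, hsum1, hIs]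
        exact add_self_zero 1
      have hemp := hInd _ Finset.sdiff_subset hJ
      rw [Finset.sdiff_eq_empty_iff_subset] at hemp
      exact hne (Finset.Subset.antisymm hI hemp)

end Equivalence

/-- For `m ≥ 7` and distinct `u, v ∈ X` with `u + v ≠ 1`, exactly `λ_7 = (2^m-8)(2^m-16)(2^m-32)(2^m-64)/5!`
blocks of `W_7` contain both `u` and `v`; that is, `(X, W_2, W_7)` is a
`GDD(2^m - 2, 2, 7)` with balance parameter `λ_7`. -/
theorem GDD_W7 (m : ℕ) (hm : 7 ≤ m) (u v : GaloisField 2 m)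
    (hu : u ∈ designX m) (hv : v ∈ designX m) (huv : u ≠ v) (hsum : u + v ≠ 1) :
    {B ∈ designW m 7 | u ∈ B ∧ v ∈ B}.ncard = (2 ^ m - 8) * (2 ^ m - 16) * (2 ^ m - 32) * (2 ^ m - 64) / Nat.factorial 5 := by
  haveI : Fintype (GaloisField 2 m) := Fintype.ofFinite _
  obtain ⟨hu0, hu1⟩ := hu
  obtain ⟨hv0, hv1⟩ := hv
  have hset : {B ∈ designW m 7 | u ∈ B ∧ v ∈ B} = ↑(Blocks u v) := by
    ext B
    simp only [Set.mem_setOf_eq, Finset.mem_coe, Blocks, Finset.mem_filter,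
      Finset.mem_univ, true_and]
    constructor
    · rintro ⟨⟨hsub, hcard, hsum1, hmin⟩, hu', hv'⟩
      obtain ⟨hc, hs, hi⟩ := (isBlock_iff' B).mp ⟨hsub, hcard, hsum1, hmin⟩
      exact ⟨hu', hv', hc, hs, hi⟩
    · rintro ⟨hu', hv', hc, hs, hi⟩
      obtain ⟨hsub, hcard, hsum1, hmin⟩ := (isBlock_iff' B).mpr ⟨hc, hs, hi⟩
      exact ⟨⟨hsub, hcard, hsum1, hmin⟩, hu', hv'⟩
  rw [hset, Set.ncard_coe_finset]
  have hq : Fintype.card (GaloisField 2 m) = 2 ^ m := by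
    rw [← Nat.card_eq_fintype_card, GaloisField.card 2 m (by omega : m ≠ 0)]
  have hkey := blocks_card_mul hu0 hu1 hv0 hv1 huv hsum
  rw [hq] at hkey
  have hprod : ∏ i ∈ Finset.range 4, (2 ^ m - 2 ^ (3 + i)) =
      (2 ^ m - 8) * (2 ^ m - 16) * (2 ^ m - 32) * (2 ^ m - 64) := by
    rw [Finset.prod_range_succ, Finset.prod_range_succ, Finset.prod_range_succ,
      Finset.prod_range_one]
    norm_num
  rw [hprod] at hkey
  rw [← hkey]
  rw [show Nat.factorial 5 = 120 by rfl]
  rw [Nat.mul_div_cancel _ (by norm_num : (0:ℕ) < 120)]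
end
end
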